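/- arXiv:0902.2444 — 4 statements merged into one kernel-verified Lean document; each statement's English description precedes it below -/
import Mathlib

section
/- Let G be the cycle graph on n ≥ 3 vertices. Then b_n(G) = 0, and for 1 ≤ k < n, b_k(G) = (n(k−1)/(n−k))·C(n−2,k). -/
open Finset

/-- Number of connected components of the induced subgraph on `W`, summed over all
`k`-subsets, each minus 1: the `k`-th special graded Betti number of a graph. -/
noncomputable def graphB {V : Type} [Fintype V] [DecidableEq V] (k : ℕ) (G : SimpleGraph V) : ℤ :=
  ∑ W ∈ Finset.powersetCard k (Finset.univ : Finset V),
    ((Nat.card (G.induce (W : Set V)).ConnectedComponent : ℤ) - 1)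

/-- `c_k(G)`: total number of connected components over all `k`-subsets. -/
noncomputable def graphC {V : Type} [Fintype V] [DecidableEq V] (k : ℕ) (G : SimpleGraph V) : ℕ :=
  ∑ W ∈ Finset.powersetCard k (Finset.univ : Finset V),
    Nat.card (G.induce (W : Set V)).ConnectedComponent

/-- `G` is a `t`-connected sum of `G₁` and `G₂`. -/
def IsConnSum {V₁ V₂ V : Type} (t : ℕ) (G₁ : SimpleGraph V₁) (G₂ : SimpleGraph V₂)
    (G : SimpleGraph V) : Prop :=
  ∃ (f₁ : V₁ ↪ V) (f₂ : V₂ ↪ V) (F₁ : Set V₁) (F₂ : Set V₂),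
    Nat.card F₁ = t ∧ Nat.card F₂ = t ∧
    (∀ x ∈ F₁, ∀ y ∈ F₁, x ≠ y → G₁.Adj x y) ∧
    (∀ x ∈ F₂, ∀ y ∈ F₂, x ≠ y → G₂.Adj x y) ∧
    Set.range f₁ ∪ Set.range f₂ = Set.univ ∧
    Set.range f₁ ∩ Set.range f₂ = f₁ '' F₁ ∧
    f₁ '' F₁ = f₂ '' F₂ ∧
    (∀ a b, G.Adj a b ↔
      ((∃ x y, G₁.Adj x y ∧ f₁ x = a ∧ f₁ y = b) ∨
       (∃ x y, G₂.Adj x y ∧ f₂ x = a ∧ f₂ y = b)))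

/-- Iterated `t`-connected sums of a list of graphs. -/
inductive IsIterConnSum (t : ℕ) :
    List ((W : Type) × SimpleGraph W) → ((W : Type) × SimpleGraph W) → Prop
  | single (p : (W : Type) × SimpleGraph W) : IsIterConnSum t [p] p
  | cons {l : List ((W : Type) × SimpleGraph W)} {p q r : (W : Type) × SimpleGraph W} :
      IsIterConnSum t l p → IsConnSum t p.2 q.2 r.2 → IsIterConnSum t (l ++ [q]) r

/-- An abstract simplicial complex on the finite vertex set `V`. -/
structure SimpComplex (V : Type) [DecidableEq V] where
  faces : Finset (Finset V)
  singleton_mem : ∀ v : V, {v} ∈ faces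
  down_closed : ∀ F ∈ faces, ∀ F', F' ⊆ F → F' ∈ faces

/-- The 1-skeleton of a simplicial complex. -/
def SimpComplex.skeleton {V : Type} [DecidableEq V] (Δ : SimpComplex V) : SimpleGraph V where
  Adj x y := x ≠ y ∧ ({x, y} : Finset V) ∈ Δ.faces
  symm := by
    constructor
    intro x y h
    exact ⟨h.1.symm, by rw [Finset.pair_comm]; exact h.2⟩
  loopless := by constructor; intro x h; exact h.1 rfl

/-- The graph of the restricted complex `Δ_W = {F ∩ W : F ∈ Δ}` on the vertex set `W`:
two vertices are connected iff they form a face of `Δ_W`. -/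
def SimpComplex.restrictGraph {V : Type} [DecidableEq V] (Δ : SimpComplex V) (W : Finset V) :
    SimpleGraph (W : Set V) :=
  SimpleGraph.fromRel (fun x y => ∃ F ∈ Δ.faces, F ∩ W = {(x : V), (y : V)})

/-- The `k`-th special graded Betti number of a simplicial complex. -/
noncomputable def complexB {V : Type} [Fintype V] [DecidableEq V] (k : ℕ)
    (Δ : SimpComplex V) : ℤ :=
  ∑ W ∈ Finset.powersetCard k (Finset.univ : Finset V),
    ((Nat.card (Δ.restrictGraph W).ConnectedComponent : ℤ) - 1)

/-- `Δ` is a `t`-connected sum of the simplicial complexes `Δ₁` and `Δ₂`. -/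
def IsConnSumC {V₁ V₂ V : Type} [DecidableEq V₁] [DecidableEq V₂] [DecidableEq V] (t : ℕ)
    (Δ₁ : SimpComplex V₁) (Δ₂ : SimpComplex V₂) (Δ : SimpComplex V) : Prop :=
  ∃ (f₁ : V₁ ↪ V) (f₂ : V₂ ↪ V) (F₁ : Finset V₁) (F₂ : Finset V₂),
    F₁.card = t ∧ F₂.card = t ∧ F₁ ∈ Δ₁.faces ∧ F₂ ∈ Δ₂.faces ∧
    (∀ F ∈ Δ₁.faces, F₁ ⊆ F → F = F₁) ∧
    (∀ F ∈ Δ₂.faces, F₂ ⊆ F → F = F₂) ∧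
    Set.range f₁ ∪ Set.range f₂ = Set.univ ∧
    Set.range f₁ ∩ Set.range f₂ = ↑(F₁.image ⇑f₁) ∧
    F₁.image ⇑f₁ = F₂.image ⇑f₂ ∧
    Δ.faces = (Δ₁.faces.image (Finset.image ⇑f₁) ∪ Δ₂.faces.image (Finset.image ⇑f₂))
      \ {F₁.image ⇑f₁}

open Fin.NatCast Fin.CommRing in
lemma comp_count {n : ℕ} [NeZero n] (hn : 3 ≤ n) (W : Finset (Fin n)) (hne : W.Nonempty)
    (hWu : W ≠ Finset.univ) :
    Nat.card ((SimpleGraph.cycleGraph n).induce (W : Set (Fin n))).ConnectedComponent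
      = (W.filter (fun i => i + 1 ∉ W)).card := by
  -- existence of a gap ahead of any vertex
  obtain ⟨g, hg⟩ : ∃ g, g ∉ W := by
    by_contra h
    push_neg at h
    exact hWu (Finset.eq_univ_iff_forall.mpr h)
  have hex : ∀ x : Fin n, ∃ m : ℕ, x + ((m + 1 : ℕ) : Fin n) ∉ W := by
    intro x
    by_cases hx : g = x
    · refine ⟨n - 1, ?_⟩
      have : ((n - 1 + 1 : ℕ) : Fin n) = 0 := by
        have : n - 1 + 1 = n := by omega
        simp [this]
      rw [this, add_zero, ← hx]; exact hg
    · refine ⟨(g - x).val - 1, ?_⟩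
      have hne0 : (g - x) ≠ 0 := sub_ne_zero.mpr hx
      have hval : (g - x).val ≠ 0 := fun h => hne0 (Fin.val_injective (by simp [h]))
      have : (g - x).val - 1 + 1 = (g - x).val := by omega
      rw [this, Fin.cast_val_eq_self]
      simpa using hg
  set m : Fin n → ℕ := fun x => Nat.find (hex x) with hm
  set e : Fin n → Fin n := fun x => x + ((m x : ℕ) : Fin n) with he
  have hstep : ∀ x, x + ((m x + 1 : ℕ) : Fin n) ∉ W := fun x => Nat.find_spec (hex x)
  have hlt : ∀ x, ∀ j < m x, x + ((j + 1 : ℕ) : Fin n) ∈ W := by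
    intro x j hj
    have := Nat.find_min (hex x) hj
    simpa using this
  have hmem : ∀ x, x ∈ W → ∀ j ≤ m x, x + ((j : ℕ) : Fin n) ∈ W := by
    intro x hx j hj
    match j with
    | 0 => simpa using hx
    | j + 1 => exact hlt x j (by omega)
  have he_mem : ∀ x, x ∈ W → e x ∈ W := fun x hx => hmem x hx (m x) le_rfl
  have he_end : ∀ x, e x + 1 ∉ W := by
    intro x
    have := hstep x
    have hc : ((m x + 1 : ℕ) : Fin n) = ((m x : ℕ) : Fin n) + 1 := by push_cast; ring
    rw [hc, ← add_assoc] at this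
    exact this
  have hone : ((1 : ℕ) : Fin n) = 1 := Nat.cast_one
  have hm_zero : ∀ x, x + 1 ∉ W → m x = 0 := by
    intro x hx
    rw [hm]
    rw [Nat.find_eq_zero]
    simpa [hone] using hx
  have he_fix : ∀ x, x + 1 ∉ W → e x = x := by
    intro x hx
    rw [he]; simp [hm_zero x hx]
  -- key: adjacency invariance
  have key : ∀ x, x + 1 ∈ W → m x = m (x + 1) + 1 ∧ e x = e (x + 1) := by
    intro x hx
    have hm0 : m x ≠ 0 := by
      intro h
      have := hstep x
      rw [h] at this
      exact this (by simpa [hone] using hx)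
    obtain ⟨t, ht⟩ : ∃ t, m x = t + 1 := ⟨m x - 1, by omega⟩
    have hmy : m (x + 1) = t := by
      rw [hm]
      rw [Nat.find_eq_iff]
      constructor
      · have := hstep x
        rw [ht] at this
        have hc : x + 1 + ((t + 1 : ℕ) : Fin n) = x + ((t + 1 + 1 : ℕ) : Fin n) := by
          push_cast; ring
        rw [hc]; exact this
      · intro j hj hcon
        have : x + ((j + 1 + 1 : ℕ) : Fin n) ∈ W := hlt x (j + 1) (by omega)
        have hc : x + 1 + ((j + 1 : ℕ) : Fin n) = x + ((j + 1 + 1 : ℕ) : Fin n) := by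
          push_cast; ring
        rw [hc] at hcon
        exact hcon this
    refine ⟨by rw [ht, hmy], ?_⟩
    rw [he]
    simp only
    rw [ht, hmy]
    push_cast
    ring
  set H := (SimpleGraph.cycleGraph n).induce (W : Set (Fin n)) with hH
  -- adjacency in H implies successor relation
  have hadj : ∀ u v : (W : Set (Fin n)), H.Adj u v → (v : Fin n) = u + 1 ∨ (u : Fin n) = v + 1 := by
    intro u v huv
    have : (SimpleGraph.cycleGraph n).Adj u v := huv
    rw [SimpleGraph.cycleGraph_adj'] at this
    rcases this with h | h
    · right
      have : ((u : Fin n) - (v : Fin n)) = 1 := by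
        have := Fin.cast_val_eq_self ((u : Fin n) - (v : Fin n))
        rw [h, hone] at this
        exact this.symm
      linear_combination (norm := ring_nf) this  -- u = v + 1
    · left
      have : ((v : Fin n) - (u : Fin n)) = 1 := by
        have := Fin.cast_val_eq_self ((v : Fin n) - (u : Fin n))
        rw [h, hone] at this
        exact this.symm
      linear_combination (norm := ring_nf) this
  have he_adj : ∀ u v : (W : Set (Fin n)), H.Adj u v → e u = e v := by
    intro u v huv
    rcases hadj u v huv with h | h
    · have hk := key u (h ▸ v.2)
      rw [← h] at hk
      exact hk.2
    · have hk := key v (h ▸ u.2)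
      rw [← h] at hk
      exact hk.2.symm
  -- e is constant on components
  have ewalk : ∀ (v w : (W : Set (Fin n))), H.Walk v w → e v.1 = e w.1 := by
    intro v w p
    induction p with
    | nil => rfl
    | cons h _ ih => exact (he_adj _ _ h).trans ih
  set E : H.ConnectedComponent → Fin n :=
    SimpleGraph.ConnectedComponent.lift (fun v => e v.1)
      (fun v w p _ => ewalk v w p) with hE
  -- reachability to endpoint
  have reach : ∀ t, ∀ x, (hx : x ∈ W) → m x = t →
      H.Reachable ⟨x, hx⟩ ⟨e x, he_mem x hx⟩ := by
    intro t
    induction t with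
    | zero =>
      intro x hx hmx
      have hex0 : e x = x := by rw [he]; simp [hmx]
      have hxe : (⟨e x, he_mem x hx⟩ : (W : Set (Fin n))) = ⟨x, hx⟩ := Subtype.ext hex0
      rw [hxe]
    | succ t ih =>
      intro x hx hmx
      have hx1 : x + 1 ∈ W := by
        have := hlt x 0 (by omega)
        simpa [hone] using this
      have hk := key x hx1
      have hmy : m (x + 1) = t := by omega
      have hadj1 : H.Adj ⟨x, hx⟩ ⟨x + 1, hx1⟩ := by
        show (SimpleGraph.cycleGraph n).Adj x (x + 1)
        rw [SimpleGraph.cycleGraph_adj']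
        right
        have h1 : x + 1 - x = 1 := by ring
        rw [h1, Fin.val_one']
        exact Nat.mod_eq_of_lt (by omega)
      have hr := ih (x + 1) hx1 hmy
      have : (⟨e (x + 1), he_mem _ hx1⟩ : (W : Set (Fin n))) = ⟨e x, he_mem x hx⟩ :=
        Subtype.ext hk.2.symm
      exact (hadj1.reachable.trans (this ▸ hr))
  -- the bijection
  set S := W.filter (fun i => i + 1 ∉ W) with hS
  have hbij : ∃ ψ : S → H.ConnectedComponent, Function.Bijective ψ := by
    refine ⟨fun i => H.connectedComponentMk ⟨i.1, (Finset.mem_filter.mp i.2).1⟩, ?_, ?_⟩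
    · intro i j hij
      have hi := Finset.mem_filter.mp i.2
      have hj := Finset.mem_filter.mp j.2
      have := congrArg E hij
      simp only [hE, SimpleGraph.ConnectedComponent.lift_mk] at this
      have hei : e i.1 = i.1 := he_fix _ hi.2
      have hej : e j.1 = j.1 := he_fix _ hj.2
      exact Subtype.ext (by rw [← hei, ← hej]; exact this)
    · intro c
      obtain ⟨v, rfl⟩ := c.exists_rep
      obtain ⟨x, hx⟩ := v
      refine ⟨⟨e x, Finset.mem_filter.mpr ⟨he_mem x hx, he_end x⟩⟩, ?_⟩
      have hr := reach (m x) x hx rfl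
      exact (SimpleGraph.ConnectedComponent.sound hr).symm
  obtain ⟨ψ, hψ⟩ := hbij
  have := Nat.card_eq_of_bijective ψ hψ
  rw [← this, Nat.card_eq_fintype_card, Fintype.card_coe]

lemma count_one {n k : ℕ} [NeZero n] (hn : 3 ≤ n) (hk1 : 1 ≤ k) (hk : k < n) (i : Fin n) :
    ((powersetCard k (univ : Finset (Fin n))).filter (fun W => i ∈ W ∧ i + 1 ∉ W)).card
      = (n - 2).choose (k - 1) := by
  have hne : i + 1 ≠ i := by
    intro h
    have h0 : (1 : Fin n) = 0 := add_eq_left.mp h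
    have h1 : (1 : Fin n).val = 0 := by rw [h0, Fin.val_zero]
    rw [Fin.val_one', Nat.one_mod_eq_one.mpr (by omega)] at h1
    exact one_ne_zero h1
  have hcard2 : ({i, i + 1} : Finset (Fin n)).card = 2 := by
    rw [Finset.card_insert_of_notMem (by
      simp only [Finset.mem_singleton]
      exact fun h => hne h.symm), Finset.card_singleton]
  have hT : (powersetCard (k - 1) ((univ : Finset (Fin n)) \ {i, i + 1})).card
      = (n - 2).choose (k - 1) := by
    rw [Finset.card_powersetCard, Finset.card_sdiff_of_subset (Finset.subset_univ _), hcard2,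
      Finset.card_univ, Fintype.card_fin]
  rw [← hT]
  apply Finset.card_bij' (fun W _ => W.erase i) (fun A _ => insert i A)
  · intro W hW
    rw [Finset.mem_filter] at hW
    exact Finset.insert_erase hW.2.1
  · intro A hA
    rw [Finset.mem_powersetCard] at hA
    have hiA : i ∉ A := fun h => by simpa using (hA.1 h)
    exact Finset.erase_insert hiA
  · intro W hW
    rw [Finset.mem_filter, Finset.mem_powersetCard] at hW
    obtain ⟨⟨_, hWc⟩, hiW, hi1W⟩ := hW
    rw [Finset.mem_powersetCard]
    constructor
    · intro x hx
      rw [Finset.mem_erase] at hx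
      rw [Finset.mem_sdiff]
      refine ⟨Finset.mem_univ x, ?_⟩
      simp only [Finset.mem_insert, Finset.mem_singleton]
      push_neg
      exact ⟨hx.1, fun h => hi1W (h ▸ hx.2)⟩
    · rw [Finset.card_erase_of_mem hiW, hWc]
  · intro A hA
    rw [Finset.mem_powersetCard] at hA
    obtain ⟨hAs, hAc⟩ := hA
    have hiA : i ∉ A := fun h => by simpa using (hAs h)
    have hi1A : i + 1 ∉ A := fun h => by simpa using (hAs h)
    rw [Finset.mem_filter, Finset.mem_powersetCard]
    refine ⟨⟨Finset.subset_univ _, ?_⟩, Finset.mem_insert_self _ _, ?_⟩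
    · rw [Finset.card_insert_of_notMem hiA, hAc]; omega
    · rw [Finset.mem_insert]
      push_neg
      exact ⟨hne, hi1A⟩

lemma sum_count {n k : ℕ} [NeZero n] (hn : 3 ≤ n) (hk1 : 1 ≤ k) (hk : k < n) :
    ∑ W ∈ powersetCard k (univ : Finset (Fin n)), (W.filter (fun i => i + 1 ∉ W)).card
      = n * (n - 2).choose (k - 1) := by
  have h1 : ∀ W : Finset (Fin n), (W.filter (fun i => i + 1 ∉ W)).card
      = ∑ i : Fin n, if i ∈ W ∧ i + 1 ∉ W then 1 else 0 := by
    intro W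
    have : W.filter (fun i => i + 1 ∉ W) = univ.filter (fun i => i ∈ W ∧ i + 1 ∉ W) := by
      ext x
      simp [Finset.mem_filter]
    rw [this, Finset.card_filter]
  simp only [h1]
  rw [Finset.sum_comm]
  have h2 : ∀ i : Fin n,
      (∑ W ∈ powersetCard k (univ : Finset (Fin n)), if i ∈ W ∧ i + 1 ∉ W then 1 else 0)
        = (n - 2).choose (k - 1) := by
    intro i
    rw [← Finset.card_filter]
    exact count_one hn hk1 hk i
  rw [Finset.sum_congr rfl (fun i _ => h2 i), Finset.sum_const, Finset.card_univ,
    Fintype.card_fin, smul_eq_mul]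

lemma algebra3 {n k : ℕ} (hn : 3 ≤ n) (hk1 : 1 ≤ k) (hk : k < n) :
    ((n * (n - 2).choose (k - 1) : ℕ) : ℚ) - ((n.choose k : ℕ) : ℚ)
      = (n : ℚ) * ((k : ℚ) - 1) / ((n : ℚ) - (k : ℚ)) * ((n - 2).choose k) := by
  rcases eq_or_lt_of_le (Nat.le_sub_one_of_lt hk) with hkn | hkn
  · -- k = n - 1
    have hk' : k = n - 1 := hkn
    have h1 : (n - 2).choose (k - 1) = 1 := by
      rw [show k - 1 = n - 2 by omega]
      exact Nat.choose_self _
    have h2 : n.choose k = n := by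
      rw [hk', Nat.choose_symm (by omega : 1 ≤ n), Nat.choose_one_right]
    have h3 : (n - 2).choose k = 0 := Nat.choose_eq_zero_of_lt (by omega)
    rw [h1, h3, h2]
    push_cast
    ring
  · -- k ≤ n - 2
    obtain ⟨a, ha⟩ : ∃ a, k = a + 1 := ⟨k - 1, by omega⟩
    obtain ⟨b, hb⟩ : ∃ b, n = a + b + 3 := ⟨n - a - 3, by omega⟩
    subst ha hb
    have e1 : (((a + b + 1).choose a) : ℚ)
        = ((a + b + 1).factorial : ℚ) / ((a.factorial : ℚ) * ((b + 1).factorial : ℚ)) := by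
      rw [Nat.cast_choose ℚ (by omega : a ≤ a + b + 1), show a + b + 1 - a = b + 1 by omega]
    have e2 : (((a + b + 3).choose (a + 1)) : ℚ)
        = ((a + b + 3).factorial : ℚ)
          / (((a + 1).factorial : ℚ) * ((b + 2).factorial : ℚ)) := by
      rw [Nat.cast_choose ℚ (by omega : a + 1 ≤ a + b + 3),
        show a + b + 3 - (a + 1) = b + 2 by omega]
    have e3 : (((a + b + 1).choose (a + 1)) : ℚ)
        = ((a + b + 1).factorial : ℚ)
          / (((a + 1).factorial : ℚ) * (b.factorial : ℚ)) := by
      rw [Nat.cast_choose ℚ (by omega : a + 1 ≤ a + b + 1),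
        show a + b + 1 - (a + 1) = b by omega]
    have hf3 : ((a + b + 3).factorial : ℚ)
        = ((a : ℚ) + b + 3) * ((a : ℚ) + b + 2) * ((a + b + 1).factorial : ℚ) := by
      rw [show a + b + 3 = (a + b + 2) + 1 by ring, Nat.factorial_succ,
        show a + b + 2 = (a + b + 1) + 1 by ring, Nat.factorial_succ]
      push_cast
      ring
    have hfb2 : ((b + 2).factorial : ℚ) = ((b : ℚ) + 2) * ((b : ℚ) + 1) * (b.factorial : ℚ) := by
      rw [show b + 2 = (b + 1) + 1 by ring, Nat.factorial_succ, Nat.factorial_succ]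
      push_cast
      ring
    have hfb1 : ((b + 1).factorial : ℚ) = ((b : ℚ) + 1) * (b.factorial : ℚ) := by
      rw [Nat.factorial_succ]
      push_cast
      ring
    have hfa1 : ((a + 1).factorial : ℚ) = ((a : ℚ) + 1) * (a.factorial : ℚ) := by
      rw [Nat.factorial_succ]
      push_cast
      ring
    have hA : (a.factorial : ℚ) ≠ 0 := Nat.cast_ne_zero.mpr (Nat.factorial_ne_zero _)
    have hB : (b.factorial : ℚ) ≠ 0 := Nat.cast_ne_zero.mpr (Nat.factorial_ne_zero _)
    rw [show a + b + 3 - 2 = a + b + 1 by omega, show a + 1 - 1 = a by omega,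
      Nat.cast_mul, e1, e2, e3, hf3, hfb2, hfb1, hfa1]
    push_cast
    have h1 : ((a : ℚ) + 1) ≠ 0 := by positivity
    have h2 : ((b : ℚ) + 1) ≠ 0 := by positivity
    have h3 : ((b : ℚ) + 2) ≠ 0 := by positivity
    have h4 : ((a : ℚ) + b + 3) - ((a : ℚ) + 1) ≠ 0 := by
      intro h
      have : (b : ℚ) + 2 = 0 := by linarith
      exact h3 this
    field_simp
    ring

/-- for the cycle graph on `n ≥ 3` vertices, `b_n = 0` and for `1 ≤ k < n`,
`b_k = (n(k-1)/(n-k))·C(n-2,k)`. -/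
theorem bk_cycleGraph (n : ℕ) (hn : 3 ≤ n) :
    graphB n (SimpleGraph.cycleGraph n) = 0 ∧
    ∀ k, 1 ≤ k → k < n →
      (graphB k (SimpleGraph.cycleGraph n) : ℚ) =
        (n : ℚ) * ((k : ℚ) - 1) / ((n : ℚ) - (k : ℚ)) * ((n - 2).choose k) := by
  haveI : NeZero n := ⟨by omega⟩
  constructor
  · unfold graphB
    have hu : (Finset.univ : Finset (Fin n)).card = n := by simp
    have hps : powersetCard n (Finset.univ : Finset (Fin n)) = {Finset.univ} := by
      have h := Finset.powersetCard_self (Finset.univ : Finset (Fin n))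
      rwa [hu] at h
    rw [hps, Finset.sum_singleton]
    rw [@Finset.coe_univ (Fin n) _]
    have h1 : Nat.card ((SimpleGraph.cycleGraph n).induce
        (Set.univ : Set (Fin n))).ConnectedComponent = 1 := by
      have hconn : ((SimpleGraph.cycleGraph n).induce (Set.univ : Set (Fin n))).Preconnected :=
        (SimpleGraph.induceUnivIso (SimpleGraph.cycleGraph n)).preconnected_iff.mpr
          SimpleGraph.cycleGraph_preconnected
      haveI := hconn.subsingleton_connectedComponent
      have hv : (Set.univ : Set (Fin n)) := ⟨⟨0, by omega⟩, trivial⟩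
      haveI : Nonempty ((SimpleGraph.cycleGraph n).induce
          (Set.univ : Set (Fin n))).ConnectedComponent :=
        ⟨((SimpleGraph.cycleGraph n).induce (Set.univ : Set (Fin n))).connectedComponentMk hv⟩
      exact Nat.card_eq_one_iff_unique.mpr ⟨inferInstance, inferInstance⟩
    rw [h1]
    ring
  · intro k hk1 hk
    have hB : graphB k (SimpleGraph.cycleGraph n)
        = ((n * (n - 2).choose (k - 1) : ℕ) : ℤ) - ((n.choose k : ℕ) : ℤ) := by
      unfold graphB
      have hcongr : ∀ W ∈ powersetCard k (Finset.univ : Finset (Fin n)),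
          ((Nat.card ((SimpleGraph.cycleGraph n).induce
            (W : Set (Fin n))).ConnectedComponent : ℤ) - 1)
            = ((W.filter (fun i => i + 1 ∉ W)).card : ℤ) - 1 := by
        intro W hW
        rw [Finset.mem_powersetCard] at hW
        have hWc : W.card = k := hW.2
        have hne : W.Nonempty := Finset.card_pos.mp (by omega)
        have hWu : W ≠ Finset.univ := by
          intro h
          rw [h, Finset.card_univ, Fintype.card_fin] at hWc
          omega
        rw [comp_count hn W hne hWu]
      rw [Finset.sum_congr rfl hcongr, Finset.sum_sub_distrib, Finset.sum_const,
        Finset.card_powersetCard, Finset.card_univ, Fintype.card_fin]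
      rw [← Nat.cast_sum, sum_count hn hk1 hk]
      push_cast
      ring
    rw [hB]
    push_cast
    have := algebra3 hn hk1 hk
    push_cast at this
    linarith [this]
end

section
/- Let G be the cycle graph C_n and v any vertex of G. Then the induced subgraph on the remaining n−1 vertices is a path (hence a tree) with n−1 vertices, so b_k(G|_{V∖{v}}) = (k−1)·C(n−2,k). -/
open Finset

open SimpleGraph
-- from t1.lean

lemma path_induce_walk_btw {m : ℕ} {W : Finset (Fin m)} {u w : (W : Set (Fin m))}
    (p : ((pathGraph m).induce (W : Set (Fin m))).Walk u w) :
    ∀ x : Fin m, ((u : Fin m).val ≤ x.val ∧ x.val ≤ (w : Fin m).val) ∨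
        ((w : Fin m).val ≤ x.val ∧ x.val ≤ (u : Fin m).val) → x ∈ W := by
  induction p with
  | nil =>
    rename_i a
    intro x h1
    have : x = (a : Fin m) := by apply Fin.ext; omega
    subst this; exact a.2
  | @cons a b c hab p ih =>
    intro x h1
    have hadj : (pathGraph m).Adj (a : Fin m) (b : Fin m) := hab
    rw [pathGraph_adj] at hadj
    by_cases hx : x.val = (a : Fin m).val
    · have : x = (a : Fin m) := Fin.ext hx
      subst this; exact a.2
    · exact ih x (by omega)

lemma path_induce_reachable_iff {m : ℕ} (W : Finset (Fin m)) (u w : (W : Set (Fin m))) :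
    ((pathGraph m).induce (W : Set (Fin m))).Reachable u w ↔
      ∀ x : Fin m, ((u : Fin m).val ≤ x.val ∧ x.val ≤ (w : Fin m).val) ∨
        ((w : Fin m).val ≤ x.val ∧ x.val ≤ (u : Fin m).val) → x ∈ W := by
  constructor
  · rintro ⟨p⟩
    exact path_induce_walk_btw p
  · intro h
    suffices H : ∀ d : ℕ, ∀ u w : (W : Set (Fin m)), (u : Fin m).val ≤ (w : Fin m).val →
        (w : Fin m).val - (u : Fin m).val = d →
        (∀ x : Fin m, (u : Fin m).val ≤ x.val → x.val ≤ (w : Fin m).val → x ∈ W) →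
        ((pathGraph m).induce (W : Set (Fin m))).Reachable u w by
      rcases le_total (u : Fin m).val (w : Fin m).val with hle | hle
      · exact H _ u w hle rfl (fun x h1 h2 => h x (by omega))
      · exact (H _ w u hle rfl (fun x h1 h2 => h x (by omega))).symm
    intro d
    induction d with
    | zero =>
      intro u w h1 h2 _
      have : u = w := Subtype.ext (Fin.ext (by omega))
      exact this ▸ Reachable.refl u
    | succ d ih =>
      intro u w h1 h2 hall
      have hlt : (u : Fin m).val + 1 < m := by
        have := (w : Fin m).isLt; omega
      set u' : Fin m := ⟨(u : Fin m).val + 1, hlt⟩ with hu'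
      have hu'W : u' ∈ W := hall u' (by simp [hu']) (by show (u : Fin m).val + 1 ≤ (w : Fin m).val; omega)
      have hadj : ((pathGraph m).induce (W : Set (Fin m))).Adj u ⟨u', hu'W⟩ := by
        show (pathGraph m).Adj _ _
        rw [pathGraph_adj]; left; rfl
      refine hadj.reachable.trans (ih ⟨u', hu'W⟩ w (by show (u : Fin m).val + 1 ≤ (w : Fin m).val; omega) (by simp [hu']; omega)
        (fun x hx1 hx2 => hall x (by simp [hu'] at hx1; omega) hx2))

-- from t2.lean


def pstarts {m : ℕ} (W : Finset (Fin m)) : Finset (Fin m) :=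
  W.filter (fun w => ∀ x ∈ W, x.val + 1 ≠ w.val)

lemma card_components_path_induce {m : ℕ} (W : Finset (Fin m)) :
    Nat.card ((pathGraph m).induce (W : Set (Fin m))).ConnectedComponent = (pstarts W).card := by
  rw [← Nat.card_eq_finsetCard]
  refine (Nat.card_eq_of_bijective
    (fun s : pstarts W => ((pathGraph m).induce (W : Set (Fin m))).connectedComponentMk
      (⟨(s : Fin m), (Finset.mem_filter.1 s.2).1⟩ : (W : Set (Fin m)))) ⟨?_, ?_⟩).symm
  · -- injective
    rintro ⟨s, hs⟩ ⟨s', hs'⟩ h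
    simp only [SimpleGraph.ConnectedComponent.eq] at h
    rw [path_induce_reachable_iff] at h
    simp only [pstarts, Finset.mem_filter] at hs hs'
    refine Subtype.ext (Fin.ext ?_)
    by_contra hne
    rcases Nat.lt_trichotomy s.val s'.val with hlt | heq | hlt
    · have h1 : s'.val - 1 < m := by have := s'.isLt; omega
      have := h ⟨s'.val - 1, h1⟩ (by simp; omega)
      exact hs'.2 _ this (by simp; omega)
    · exact hne heq
    · have h1 : s.val - 1 < m := by have := s.isLt; omega
      have := h ⟨s.val - 1, h1⟩ (by simp; omega)
      exact hs.2 _ this (by simp; omega)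
  · -- surjective
    rintro c
    induction c using SimpleGraph.ConnectedComponent.ind with
    | _ x =>
      classical
      -- the set of candidates for the run start of x
      set A : Finset (Fin m) := W.filter (fun y => y.val ≤ (x : Fin m).val ∧
        ∀ z : Fin m, y.val ≤ z.val → z.val ≤ (x : Fin m).val → z ∈ W) with hA
      have hxA : (x : Fin m) ∈ A := by
        simp only [hA, Finset.mem_filter]
        refine ⟨x.2, le_refl _, fun z h1 h2 => ?_⟩
        have : z = (x : Fin m) := Fin.ext (le_antisymm h2 h1)
        subst this; exact x.2
      have hAne : A.Nonempty := ⟨_, hxA⟩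
      set s := A.min' hAne with hs
      have hsA : s ∈ A := A.min'_mem hAne
      simp only [hA, Finset.mem_filter] at hsA
      have hstart : s ∈ pstarts W := by
        simp only [pstarts, Finset.mem_filter]
        refine ⟨hsA.1, fun z hz hz1 => ?_⟩
        have hzA : z ∈ A := by
          simp only [hA, Finset.mem_filter]
          refine ⟨hz, by omega, fun y h1 h2 => ?_⟩
          by_cases hy : y = z
          · subst hy; exact hz
          · exact hsA.2.2 y (by
              have : y.val ≠ z.val := fun hh => hy (Fin.ext hh)
              omega) h2
        have := A.min'_le z hzA
        rw [← hs] at this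
        omega
      refine ⟨⟨s, hstart⟩, ?_⟩
      simp only [SimpleGraph.ConnectedComponent.eq]
      rw [path_induce_reachable_iff]
      intro z hz
      have hz' : (s.val ≤ z.val ∧ z.val ≤ (x : Fin m).val) ∨
          ((x : Fin m).val ≤ z.val ∧ z.val ≤ s.val) := hz
      rcases hz' with ⟨h1, h2⟩ | ⟨h1, h2⟩
      · exact hsA.2.2 z h1 h2
      · have : s.val ≤ (x : Fin m).val := hsA.2.1
        have : z = s := Fin.ext (by omega)
        subst this; exact hsA.1

-- from t3.lean


lemma card_powersetCard_filter_pair {α : Type*} [DecidableEq α] (s : Finset α) (a b : α)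
    (ha : a ∈ s) (hb : b ∈ s) (hab : a ≠ b) (k : ℕ) :
    ((Finset.powersetCard (k + 2) s).filter (fun W => a ∈ W ∧ b ∈ W)).card
      = (s.card - 2).choose k := by
  have hc : ((s.erase a).erase b).card = s.card - 2 := by
    rw [Finset.card_erase_of_mem (Finset.mem_erase.2 ⟨hab.symm, hb⟩),
      Finset.card_erase_of_mem ha]
    omega
  rw [← hc, ← Finset.card_powersetCard k ((s.erase a).erase b)]
  refine Finset.card_bij' (fun W _ => (W.erase a).erase b)
      (fun U _ => insert a (insert b U)) ?hi ?hj ?left ?right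
  case hi =>
    rintro W hW
    simp only [Finset.mem_filter, Finset.mem_powersetCard] at hW
    obtain ⟨⟨hWs, hWc⟩, haW, hbW⟩ := hW
    rw [Finset.mem_powersetCard]
    constructor
    · intro x hx
      simp only [Finset.mem_erase] at hx ⊢
      exact ⟨hx.1, hx.2.1, hWs hx.2.2⟩
    · rw [Finset.card_erase_of_mem (by simp [Finset.mem_erase, hab.symm, hbW]),
        Finset.card_erase_of_mem haW, hWc]
      omega
  case hj =>
    rintro U hU
    rw [Finset.mem_powersetCard] at hU
    obtain ⟨hUs, hUc⟩ := hU
    have haU : a ∉ U := fun h => by simpa using (hUs h)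
    have hbU : b ∉ U := fun h => by
      have := hUs h; simp only [Finset.mem_erase] at this; exact this.1 rfl
    simp only [Finset.mem_filter, Finset.mem_powersetCard]
    refine ⟨⟨?_, ?_⟩, by simp, by simp [hab.symm]⟩
    · intro x hx
      simp only [Finset.mem_insert] at hx
      rcases hx with rfl | rfl | hx
      · exact ha
      · exact hb
      · exact (Finset.mem_of_mem_erase (Finset.mem_of_mem_erase (hUs hx)))
    · rw [Finset.card_insert_of_notMem (by simp [hab, haU]),
        Finset.card_insert_of_notMem hbU, hUc]
  case left =>
    rintro W hW
    simp only [Finset.mem_filter] at hW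
    obtain ⟨_, haW, hbW⟩ := hW
    ext x
    simp only [Finset.mem_insert, Finset.mem_erase]
    constructor
    · rintro (rfl | rfl | h)
      · exact haW
      · exact hbW
      · exact h.2.2
    · intro hx
      by_cases h1 : x = a
      · exact Or.inl h1
      by_cases h2 : x = b
      · exact Or.inr (Or.inl h2)
      · exact Or.inr (Or.inr ⟨h2, h1, hx⟩)
  case right =>
    rintro U hU
    rw [Finset.mem_powersetCard] at hU
    have haU : a ∉ insert b U := by
      simp only [Finset.mem_insert]
      rintro (rfl | h)
      · exact hab rfl
      · simpa using hU.1 h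
    have hbU : b ∉ U := fun h => by
      have := hU.1 h; simp only [Finset.mem_erase] at this; exact this.1 rfl
    show ((insert a (insert b U)).erase a).erase b = U
    rw [Finset.erase_insert haU, Finset.erase_insert hbU]

def pedges (m : ℕ) : Finset (Fin m × Fin m) :=
  (Finset.univ ×ˢ Finset.univ).filter (fun p => p.1.val + 1 = p.2.val)

lemma card_pedges (m : ℕ) : (pedges m).card = m - 1 := by
  rw [← Fintype.card_fin (m - 1), ← Finset.card_univ]
  apply Eq.symm
  apply Finset.card_bij (i := fun (i : Fin (m-1)) _ =>
    ((⟨i.val, by omega⟩ : Fin m), (⟨i.val + 1, by omega⟩ : Fin m)))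
  · intro i _
    simp [pedges]
  · intro i _ j _ h
    simp only [Prod.mk.injEq, Fin.mk.injEq] at h
    exact Fin.ext h.1
  · rintro ⟨p1, p2⟩ hp
    simp only [pedges, Finset.mem_filter] at hp
    refine ⟨⟨p1.val, by have := p2.isLt; omega⟩, Finset.mem_univ _, ?_⟩
    refine Prod.ext (Fin.ext rfl) (Fin.ext ?_)
    simp [hp.2.symm]

lemma card_nonstarts {m : ℕ} (W : Finset (Fin m)) :
    (W.filter (fun w => ¬ ∀ x ∈ W, x.val + 1 ≠ w.val)).card
      = ((pedges m).filter (fun p => p.1 ∈ W ∧ p.2 ∈ W)).card := by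
  apply Eq.symm
  apply Finset.card_bij (i := fun p _ => p.2)
  · intro p hp
    simp only [pedges, Finset.mem_filter, Finset.mem_product] at hp
    simp only [Finset.mem_filter]
    refine ⟨hp.2.2, ?_⟩
    push_neg
    exact ⟨p.1, hp.2.1, hp.1.2⟩
  · intro p hp q hq h
    simp only [pedges, Finset.mem_filter, Finset.mem_product] at hp hq
    have h1 : p.1 = q.1 := Fin.ext (by have := hp.1.2; have := hq.1.2; simp only [h] at *; omega)
    exact Prod.ext h1 h
  · intro w hw
    simp only [Finset.mem_filter] at hw
    push_neg at hw
    obtain ⟨hwW, x, hxW, hx⟩ := hw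
    exact ⟨(x, w), by simp [pedges, Finset.mem_filter, hx, hxW, hwW], rfl⟩

-- from t4.lean








lemma choose_identity (m r : ℕ) :
    (r + 1) * m.choose (r + 2) = (r + 1) * (m - 1).choose (r + 2) + (m - 1) * (m - 2).choose r := by
  match m with
  | 0 => simp
  | 1 => simp [Nat.choose_eq_zero_of_lt]
  | (q + 2) =>
    have h1 : (q + 2).choose (r + 2) = (q + 1).choose (r + 1) + (q + 1).choose (r + 2) :=
      Nat.choose_succ_succ (q + 1) (r + 1)
    have h2 : (q + 1) * q.choose r = (q + 1).choose (r + 1) * (r + 1) :=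
      Nat.add_one_mul_choose_eq q r
    simp only [Nat.add_sub_cancel, show q + 2 - 1 = q + 1 from rfl, show q + 2 - 2 = q from rfl]
    rw [h1]
    ring_nf
    ring_nf at h2
    omega

lemma graphB_pathGraph (m k : ℕ) (hk : 1 ≤ k) :
    graphB k (pathGraph m) = ((k : ℤ) - 1) * ((m - 1).choose k) := by
  classical
  unfold graphB
  -- rewrite each summand
  have hterm : ∀ W ∈ Finset.powersetCard k (Finset.univ : Finset (Fin m)),
      ((Nat.card ((pathGraph m).induce (W : Set (Fin m))).ConnectedComponent : ℤ) - 1)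
        = ((k : ℤ) - 1) - ((pedges m).filter (fun p => p.1 ∈ W ∧ p.2 ∈ W)).card := by
    intro W hW
    rw [Finset.mem_powersetCard] at hW
    rw [card_components_path_induce]
    have hsplit := Finset.card_filter_add_card_filter_not
      (s := W) (p := fun w => ∀ x ∈ W, x.val + 1 ≠ w.val)
    rw [card_nonstarts] at hsplit
    have hps : (pstarts W).card
        = (W.filter (fun w => ∀ x ∈ W, x.val + 1 ≠ w.val)).card := rfl
    have hWk : W.card = k := hW.2
    rw [hps]
    omega
  rw [Finset.sum_congr rfl hterm, Finset.sum_sub_distrib, Finset.sum_const,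
    Finset.card_powersetCard, Finset.card_univ, Fintype.card_fin]
  -- now compute the sum of edge counts
  have hedge : ∑ W ∈ Finset.powersetCard k (Finset.univ : Finset (Fin m)),
      (((pedges m).filter (fun p => p.1 ∈ W ∧ p.2 ∈ W)).card : ℤ)
      = if k = 1 then 0 else (((m - 1 : ℕ) : ℤ)) * (((m - 2).choose (k - 2) : ℕ) : ℤ) := by
    rcases Nat.eq_or_lt_of_le hk with h1 | h2
    · -- k = 1
      rw [if_pos h1.symm]
      apply Finset.sum_eq_zero
      intro W hW
      rw [Finset.mem_powersetCard] at hW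
      obtain ⟨w, rfl⟩ := Finset.card_eq_one.1 (show W.card = 1 by omega)
      norm_cast
      rw [Finset.card_eq_zero, Finset.filter_eq_empty_iff]
      rintro ⟨p1, p2⟩ hp
      simp only [pedges, Finset.mem_filter] at hp
      simp only [Finset.mem_singleton, not_and]
      rintro rfl rfl
      omega
    · -- k ≥ 2
      rw [if_neg (by omega)]
      obtain ⟨r, rfl⟩ : ∃ r, k = r + 2 := ⟨k - 2, by omega⟩
      have swap : ∑ W ∈ Finset.powersetCard (r+2) (Finset.univ : Finset (Fin m)),
          (((pedges m).filter (fun p => p.1 ∈ W ∧ p.2 ∈ W)).card : ℤ)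
          = ∑ p ∈ pedges m,
            ((((Finset.powersetCard (r+2) (Finset.univ : Finset (Fin m))).filter
              (fun W => p.1 ∈ W ∧ p.2 ∈ W)).card : ℤ)) := by
        simp only [Finset.card_filter]
        push_cast
        rw [Finset.sum_comm]
      rw [swap]
      have hval : ∀ p ∈ pedges m,
          ((((Finset.powersetCard (r+2) (Finset.univ : Finset (Fin m))).filter
            (fun W => p.1 ∈ W ∧ p.2 ∈ W)).card : ℤ)) = ((m - 2).choose r : ℤ) := by
        intro p hp
        simp only [pedges, Finset.mem_filter] at hp
        rw [card_powersetCard_filter_pair _ _ _ (Finset.mem_univ _) (Finset.mem_univ _)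
          (fun h => by rw [h] at hp; omega) r]
        rw [Finset.card_univ, Fintype.card_fin]
      rw [Finset.sum_congr rfl hval, Finset.sum_const, card_pedges]
      push_cast
      ring
  rw [hedge]
  rcases Nat.eq_or_lt_of_le hk with h1 | h2
  · rw [if_pos h1.symm, ← h1]; simp
  · rw [if_neg (by omega)]
    obtain ⟨r, rfl⟩ : ∃ r, k = r + 2 := ⟨k - 2, by omega⟩
    have hnat : ((r + 1) * m.choose (r + 2) : ℤ)
        = ((r + 1) * (m - 1).choose (r + 2) + (m - 1) * (m - 2).choose r : ℕ) := by
      exact_mod_cast congrArg (Nat.cast (R := ℤ)) (choose_identity m r)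
    push_cast at hnat ⊢
    rw [nsmul_eq_mul]
    linarith [hnat]

-- from t5.lean


/-- Iso between induced subgraphs along an adjacency-preserving equivalence. -/
def induceIsoOfEquiv {V V' : Type*} (e : V ≃ V') {G : SimpleGraph V} {G' : SimpleGraph V'}
    (h : ∀ a b, G.Adj a b ↔ G'.Adj (e a) (e b)) (W : Finset V) [DecidableEq V'] :
    G.induce (W : Set V) ≃g G'.induce ((W.image e : Finset V') : Set V') where
  toEquiv := e.subtypeEquiv (by
    intro a
    simp only [Finset.coe_image, Set.mem_image, Finset.mem_coe]
    constructor
    · intro ha; exact ⟨a, ha, rfl⟩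
    · rintro ⟨b, hb, hba⟩; rwa [← e.injective hba])
  map_rel_iff' := by
    intro a b
    simp only [Equiv.subtypeEquiv_apply, comap_adj, Function.Embedding.coe_subtype]
    exact (h a b).symm

lemma graphB_iso {V V' : Type} [Fintype V] [DecidableEq V] [Fintype V'] [DecidableEq V']
    (e : V ≃ V') {G : SimpleGraph V} {G' : SimpleGraph V'}
    (h : ∀ a b, G.Adj a b ↔ G'.Adj (e a) (e b)) (k : ℕ) :
    graphB k G = graphB k G' := by
  unfold graphB
  refine Finset.sum_bij' (fun W _ => W.image e) (fun U _ => U.image e.symm)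
    ?hi ?hj ?left ?right ?heq
  case hi =>
    intro W hW
    rw [Finset.mem_powersetCard] at hW ⊢
    exact ⟨Finset.subset_univ _, by rw [Finset.card_image_of_injective _ e.injective, hW.2]⟩
  case hj =>
    intro U hU
    rw [Finset.mem_powersetCard] at hU ⊢
    exact ⟨Finset.subset_univ _, by rw [Finset.card_image_of_injective _ e.symm.injective, hU.2]⟩
  case left =>
    intro W _
    simp [Finset.image_image]
  case right =>
    intro U _
    simp [Finset.image_image]
  case heq =>
    intro W _
    have := (induceIsoOfEquiv e h W).connectedComponentEquiv
    rw [Nat.card_congr this]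

lemma reach_invariant {V : Type*} {G : SimpleGraph V} (P : V → Prop)
    (h : ∀ a b, G.Adj a b → (P a ↔ P b)) {u v : V} (hr : G.Reachable u v) : P u ↔ P v := by
  obtain ⟨w⟩ := hr
  induction w with
  | nil => rfl
  | cons ha _ ih => exact (h _ _ ha).trans ih

lemma pathGraph_isAcyclic (m : ℕ) : (pathGraph m).IsAcyclic := by
  rw [isAcyclic_iff_forall_adj_isBridge]
  intro u w huw
  rw [isBridge_iff]
  intro hreach
  have hadj := pathGraph_adj.1 huw
  have hinv : ∀ a b : Fin m, ((pathGraph m) \ fromEdgeSet {s(u, w)}).Adj a b →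
      ((a.val ≤ min u.val w.val) ↔ (b.val ≤ min u.val w.val)) := by
    intro a b hab
    rw [sdiff_adj, fromEdgeSet_adj] at hab
    obtain ⟨hab1, hab2⟩ := hab
    rw [pathGraph_adj] at hab1
    have hne : ¬((a = u ∧ b = w) ∨ (a = w ∧ b = u)) := by
      intro hcase
      apply hab2
      refine ⟨?_, ?_⟩
      · rw [Set.mem_singleton_iff, Sym2.eq_iff]; tauto
      · rcases hcase with ⟨rfl, rfl⟩ | ⟨rfl, rfl⟩
        · exact huw.ne
        · exact huw.ne'
    have h1 : ¬(a.val = u.val ∧ b.val = w.val) := by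
      rintro ⟨x1, x2⟩; exact hne (Or.inl ⟨Fin.ext x1, Fin.ext x2⟩)
    have h2 : ¬(a.val = w.val ∧ b.val = u.val) := by
      rintro ⟨x1, x2⟩; exact hne (Or.inr ⟨Fin.ext x1, Fin.ext x2⟩)
    omega
  have key := reach_invariant (fun x : Fin m => x.val ≤ min u.val w.val)
    (fun a b hab => hinv a b hab) hreach
  omega

-- from t6.lean

section delEquiv
variable {n : ℕ} (v : Fin n)

lemma ne_of_mem_compl {x : Fin n} (hx : x ∈ ({v}ᶜ : Set (Fin n))) : x ≠ v :=
  fun h => hx (Set.mem_singleton_iff.2 h)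

def fdel (hn : 3 ≤ n) (x : Fin n) : Fin (n - 1) :=
  ⟨(x - v).val - 1, by have := (x - v).isLt; omega⟩

def gdel (hn : 3 ≤ n) (j : Fin (n - 1)) : Fin n :=
  haveI : NeZero n := ⟨by omega⟩
  v + ⟨j.val + 1, by have := j.isLt; omega⟩

lemma gdel_ne (hn : 3 ≤ n) (j : Fin (n - 1)) : gdel v hn j ≠ v := by
  haveI : NeZero n := ⟨by omega⟩
  unfold gdel
  intro h
  have h2 := add_eq_left.1 h
  have h3 := congrArg Fin.val h2
  simp at h3

lemma gdel_fdel (hn : 3 ≤ n) {x : Fin n} (hx : x ≠ v) : gdel v hn (fdel v hn x) = x := by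
  haveI : NeZero n := ⟨by omega⟩
  unfold gdel fdel
  have hne : x - v ≠ 0 := sub_ne_zero.2 hx
  have h0 : (x - v).val ≠ 0 := fun h => hne (Fin.ext h)
  suffices h : ∀ w : Fin n, w.val = (x - v).val → v + w = x by
    apply h; simp; omega
  rintro w hw
  have : w = x - v := Fin.ext hw
  subst this
  rw [add_comm, sub_add_cancel]

lemma fdel_gdel (hn : 3 ≤ n) (j : Fin (n - 1)) : fdel v hn (gdel v hn j) = j := by
  haveI : NeZero n := ⟨by omega⟩
  unfold gdel fdel
  apply Fin.ext
  show ((v + (⟨j.val + 1, by have := j.isLt; omega⟩ : Fin n)) - v).val - 1 = j.val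
  rw [add_sub_cancel_left]
  simp

def delEquiv (hn : 3 ≤ n) : ({v}ᶜ : Set (Fin n)) ≃ Fin (n - 1) where
  toFun x := fdel v hn (x : Fin n)
  invFun j := ⟨gdel v hn j, fun h => (gdel_ne v hn j) (Set.mem_singleton_iff.1 h)⟩
  left_inv x := Subtype.ext (gdel_fdel v hn (ne_of_mem_compl v x.2))
  right_inv j := fdel_gdel v hn j

lemma delEquiv_adj (hn : 3 ≤ n) (a b : ({v}ᶜ : Set (Fin n))) :
    ((cycleGraph n).induce ({v}ᶜ : Set (Fin n))).Adj a b ↔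
      (pathGraph (n - 1)).Adj (delEquiv v hn a) (delEquiv v hn b) := by
  haveI : NeZero n := ⟨by omega⟩
  have key : ∀ x y : ({v}ᶜ : Set (Fin n)),
      (((x : Fin n)) - (y : Fin n)).val = 1 ↔
        ((x : Fin n) - v).val = ((y : Fin n) - v).val + 1 := by
    intro x y
    have hxe : (x : Fin n) - (y : Fin n) = ((x : Fin n) - v) - ((y : Fin n) - v) := by
      rw [sub_sub_sub_cancel_right]
    set A := (x : Fin n) - v with hA
    set B := (y : Fin n) - v with hB
    have hxne : A ≠ 0 := sub_ne_zero.2 (ne_of_mem_compl v x.2)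
    have hyne : B ≠ 0 := sub_ne_zero.2 (ne_of_mem_compl v y.2)
    have hx0 : A.val ≠ 0 := fun h => hxne (Fin.ext h)
    have hy0 : B.val ≠ 0 := fun h => hyne (Fin.ext h)
    have hxlt := A.isLt
    have hylt := B.isLt
    rw [hxe]
    have hval : (A - B).val = (n - B.val + A.val) % n := by
      rw [Fin.sub_def]
    have hmod : (A - B).val = if B.val ≤ A.val then A.val - B.val else A.val + n - B.val := by
      rw [hval]
      rcases le_or_gt B.val A.val with hle | hlt
      · rw [if_pos hle]
        have h1 : n - B.val + A.val = n + (A.val - B.val) := by omega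
        rw [h1, Nat.add_mod_left, Nat.mod_eq_of_lt (by omega)]
      · rw [if_neg (by omega)]
        rw [Nat.mod_eq_of_lt (by omega)]
        omega
    rw [hmod]
    split <;> omega
  show (cycleGraph n).Adj _ _ ↔ _
  rw [cycleGraph_adj', pathGraph_adj]
  simp only [Function.Embedding.coe_subtype]
  rw [key a b, key b a]
  show _ ↔ (((a : Fin n) - v).val - 1) + 1 = ((b : Fin n) - v).val - 1 ∨
    (((b : Fin n) - v).val - 1) + 1 = ((a : Fin n) - v).val - 1
  have hxne : ((a : Fin n) - v) ≠ 0 := sub_ne_zero.2 (ne_of_mem_compl v a.2)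
  have hyne : ((b : Fin n) - v) ≠ 0 := sub_ne_zero.2 (ne_of_mem_compl v b.2)
  have hx0 : ((a : Fin n) - v).val ≠ 0 := fun h => hxne (Fin.ext h)
  have hy0 : ((b : Fin n) - v).val ≠ 0 := fun h => hyne (Fin.ext h)
  omega

end delEquiv

/-- deleting any vertex from the cycle `C_n` yields a path (hence a tree) on
`n-1` vertices, so its `b_k` equals `(k-1)·C(n-2,k)`. -/
theorem bk_cycle_delete_vertex (n : ℕ) (hn : 3 ≤ n) (v : Fin n) :
    Nonempty (((SimpleGraph.cycleGraph n).induce ({v}ᶜ : Set (Fin n))) ≃g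
      SimpleGraph.pathGraph (n - 1)) ∧
    ((SimpleGraph.cycleGraph n).induce ({v}ᶜ : Set (Fin n))).IsTree ∧
    Fintype.card ({v}ᶜ : Set (Fin n)) = n - 1 ∧
    ∀ k, 1 ≤ k →
      graphB k ((SimpleGraph.cycleGraph n).induce ({v}ᶜ : Set (Fin n))) =
        ((k : ℤ) - 1) * ((n - 2).choose k) := by

  have iso : ((SimpleGraph.cycleGraph n).induce ({v}ᶜ : Set (Fin n))) ≃g
      SimpleGraph.pathGraph (n - 1) :=
    { toEquiv := delEquiv v hn
      map_rel_iff' := fun {a b} => (delEquiv_adj v hn a b).symm }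
  have hconn : (SimpleGraph.pathGraph (n - 1)).Connected := by
    have hm : n - 1 = (n - 2) + 1 := by omega
    rw [hm]
    exact SimpleGraph.pathGraph_connected (n - 2)
  refine ⟨⟨iso⟩, ⟨(iso.connected_iff).2 hconn, ?_⟩, ?_, ?_⟩
  · intro u c hc
    exact pathGraph_isAcyclic (n - 1) (c.map iso.toHom)
      ((SimpleGraph.Walk.map_isCycle_iff_of_injective iso.toEquiv.injective).2 hc)
  · rw [Fintype.card_compl_set]
    simp
  · intro k hk
    rw [graphB_iso (delEquiv v hn) (fun a b => delEquiv_adj v hn a b) k,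
      graphB_pathGraph (n - 1) k hk, show n - 1 - 1 = n - 2 from by omega]
end

section
/- Let Δ₁, Δ₂ be simplicial complexes on n₁ and n₂ vertices respectively, and let Δ be a t-connected sum of Δ₁ and Δ₂ with t ≥ 3. Then b_k(Δ) = Σ_{i=0}^{k} [b_i(Δ₁)·C(n₂−t, k−i) + b_i(Δ₂)·C(n₁−t, k−i)] + C(n₁+n₂−2t, k). -/
open Finset

set_option linter.unusedSectionVars false
set_option maxHeartbeats 1000000

section Aux
open SimpleGraph
variable {V₁ V₂ V : Type} [DecidableEq V₁] [DecidableEq V₂] [DecidableEq V]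

/-- preimage of a finset under an embedding -/
noncomputable def preE (f : V₁ ↪ V) (W : Finset V) : Finset V₁ := W.preimage f (f.injective.injOn)

lemma mem_preE {f : V₁ ↪ V} {W : Finset V} {x : V₁} : x ∈ preE f W ↔ f x ∈ W :=
  Finset.mem_preimage

structure GlueHyp (G₁ : SimpleGraph V₁) (f₁ : V₁ ↪ V) (F₁ : Finset V₁)
    (G₂ : SimpleGraph V₂) (f₂ : V₂ ↪ V) (F₂ : Finset V₂) (G : SimpleGraph V) : Prop where
  cov : ∀ a : V, (∃ x, f₁ x = a) ∨ (∃ y, f₂ y = a)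
  mem1 : ∀ (x : V₁) (y : V₂), f₂ y = f₁ x → x ∈ F₁
  mem2 : ∀ (y : V₂) (x : V₁), f₁ x = f₂ y → y ∈ F₂
  clique1 : ∀ x ∈ F₁, ∀ y ∈ F₁, x ≠ y → G₁.Adj x y
  clique2 : ∀ x ∈ F₂, ∀ y ∈ F₂, x ≠ y → G₂.Adj x y
  adj : ∀ a b, G.Adj a b ↔ (∃ x y, G₁.Adj x y ∧ f₁ x = a ∧ f₁ y = b) ∨
      (∃ x y, G₂.Adj x y ∧ f₂ x = a ∧ f₂ y = b)

variable {G₁ : SimpleGraph V₁} {G₂ : SimpleGraph V₂} {G : SimpleGraph V}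
  {f₁ : V₁ ↪ V} {f₂ : V₂ ↪ V} {F₁ : Finset V₁} {F₂ : Finset V₂}

lemma GlueHyp.symm (h : GlueHyp G₁ f₁ F₁ G₂ f₂ F₂ G) : GlueHyp G₂ f₂ F₂ G₁ f₁ F₁ G :=
  ⟨fun a => (h.cov a).symm, h.mem2, h.mem1, h.clique2, h.clique1,
   fun a b => (h.adj a b).trans or_comm⟩

/-- one-sided relation: both endpoints on side 1, or crossing via the cliques -/
def SRel (G₁ : SimpleGraph V₁) (f₁ : V₁ ↪ V) (F₁ : Finset V₁)
    (G₂ : SimpleGraph V₂) (f₂ : V₂ ↪ V) (F₂ : Finset V₂)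
    (W : Finset V) (u v : V) : Prop :=
  (∃ x y : ((preE f₁ W : Finset V₁) : Set V₁),
      (G₁.induce ((preE f₁ W : Finset V₁) : Set V₁)).Reachable x y ∧ f₁ ↑x = u ∧ f₁ ↑y = v) ∨
  (∃ x c : ((preE f₁ W : Finset V₁) : Set V₁), ∃ d y : ((preE f₂ W : Finset V₂) : Set V₂),
      f₁ ↑x = u ∧ f₂ ↑y = v ∧ ↑c ∈ F₁ ∧ ↑d ∈ F₂ ∧
      (G₁.induce ((preE f₁ W : Finset V₁) : Set V₁)).Reachable x c ∧
      (G₂.induce ((preE f₂ W : Finset V₂) : Set V₂)).Reachable d y)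

def CRel (G₁ : SimpleGraph V₁) (f₁ : V₁ ↪ V) (F₁ : Finset V₁)
    (G₂ : SimpleGraph V₂) (f₂ : V₂ ↪ V) (F₂ : Finset V₂)
    (W : Finset V) (u v : V) : Prop :=
  SRel G₁ f₁ F₁ G₂ f₂ F₂ W u v ∨ SRel G₂ f₂ F₂ G₁ f₁ F₁ W u v

lemma clique_reach {F₁ : Finset V₁} (hcl : ∀ x ∈ F₁, ∀ y ∈ F₁, x ≠ y → G₁.Adj x y)
    {S : Finset V₁} (c d : (S : Set V₁)) (hc : ↑c ∈ F₁) (hd : ↑d ∈ F₁) :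
    (G₁.induce (S : Set V₁)).Reachable c d := by
  rcases eq_or_ne c d with rfl | h
  · exact Reachable.refl _
  · exact SimpleGraph.Adj.reachable
      (by simpa using hcl _ hc _ hd (fun hh => h (Subtype.ext hh)))

lemma induce_adj_iff {S : Finset V₁} {x y : (S : Set V₁)} :
    (G₁.induce (S : Set V₁)).Adj x y ↔ G₁.Adj ↑x ↑y := Iff.rfl


lemma step (h : GlueHyp G₁ f₁ F₁ G₂ f₂ F₂ G) {W : Finset V} {x₀ y₀ : V₁}
    (he : G₁.Adj x₀ y₀) (hu : f₁ x₀ ∈ W) (hw : f₁ y₀ ∈ W) {v : V}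
    (hr : CRel G₁ f₁ F₁ G₂ f₂ F₂ W (f₁ y₀) v) : CRel G₁ f₁ F₁ G₂ f₂ F₂ W (f₁ x₀) v := by
  have hx₀ : x₀ ∈ (preE f₁ W : Finset V₁) := mem_preE.2 hu
  have hy₀ : y₀ ∈ (preE f₁ W : Finset V₁) := mem_preE.2 hw
  set S₁ := (preE f₁ W : Finset V₁)
  let x₀' : ((S₁ : Finset V₁) : Set V₁) := ⟨x₀, Finset.mem_coe.2 hx₀⟩
  let y₀' : ((S₁ : Finset V₁) : Set V₁) := ⟨y₀, Finset.mem_coe.2 hy₀⟩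
  have hedge : (G₁.induce ((S₁ : Finset V₁) : Set V₁)).Adj x₀' y₀' := induce_adj_iff.2 he
  rcases hr with (⟨x, y, hxy, hx, hy⟩ | ⟨x, c, d, y, hx, hy, hcF, hdF, r1, r2⟩) |
    (⟨x, y, hxy, hx, hy⟩ | ⟨x, c, d, y, hx, hy, hcF, hdF, r2, r1⟩)
  · -- pure side 1
    have hxe : x = y₀' := Subtype.ext (f₁.injective hx)
    exact Or.inl (Or.inl ⟨x₀', y, hedge.reachable.trans (hxe ▸ hxy), rfl, hy⟩)
  · -- side 1 then cross
    have hxe : x = y₀' := Subtype.ext (f₁.injective hx)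
    exact Or.inl (Or.inr ⟨x₀', c, d, y, rfl, hy, hcF, hdF,
      hedge.reachable.trans (hxe ▸ r1), r2⟩)
  · -- pure side 2 from f₁ y₀
    have hy₀F : y₀ ∈ F₁ := h.mem1 y₀ ↑x hx
    have hxF : (↑x : V₂) ∈ F₂ := h.mem2 ↑x y₀ hx.symm
    exact Or.inl (Or.inr ⟨x₀', y₀', x, y, rfl, hy, hy₀F, hxF, hedge.reachable, hxy⟩)
  · -- side 2 then cross back to side 1
    have hy₀F : y₀ ∈ F₁ := h.mem1 y₀ ↑x hx
    exact Or.inl (Or.inl ⟨x₀', y,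
      (hedge.reachable.trans (clique_reach h.clique1 y₀' d hy₀F hdF)).trans r1, rfl, hy⟩)

lemma crel_swap {W : Finset V} {u v : V} :
    CRel G₂ f₂ F₂ G₁ f₁ F₁ W u v → CRel G₁ f₁ F₁ G₂ f₂ F₂ W u v := Or.symm

lemma key (h : GlueHyp G₁ f₁ F₁ G₂ f₂ F₂ G) {W : Finset V} {u v : ((W : Finset V) : Set V)}
    (hr : (G.induce ((W : Finset V) : Set V)).Reachable u v) :
    CRel G₁ f₁ F₁ G₂ f₂ F₂ W ↑u ↑v := by
  obtain ⟨p⟩ := hr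
  induction p with
  | nil =>
    rename_i w
    rcases h.cov ↑w with ⟨x, hx⟩ | ⟨y, hy⟩
    · have hx' : x ∈ preE f₁ W := mem_preE.2 (by rw [hx]; exact Finset.mem_coe.1 w.2)
      exact Or.inl (Or.inl ⟨⟨x, Finset.mem_coe.2 hx'⟩, ⟨x, Finset.mem_coe.2 hx'⟩,
        Reachable.refl _, hx, hx⟩)
    · have hy' : y ∈ preE f₂ W := mem_preE.2 (by rw [hy]; exact Finset.mem_coe.1 w.2)
      exact Or.inr (Or.inl ⟨⟨y, Finset.mem_coe.2 hy'⟩, ⟨y, Finset.mem_coe.2 hy'⟩,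
        Reachable.refl _, hy, hy⟩)
  | cons hab p ih =>
    rename_i a b c
    have hadj : G.Adj ↑a ↑b := hab
    rcases (h.adj _ _).1 hadj with ⟨x, y, he, hx, hy⟩ | ⟨x, y, he, hx, hy⟩
    · have := step h he (hx ▸ Finset.mem_coe.1 a.2) (hy ▸ Finset.mem_coe.1 b.2)
        (by rw [hy]; exact ih)
      rwa [hx] at this
    · have := step h.symm he (hx ▸ Finset.mem_coe.1 a.2) (hy ▸ Finset.mem_coe.1 b.2)
        (by rw [hy]; exact crel_swap ih)
      rw [hx] at this
      exact crel_swap this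

lemma reach_side1 (h : GlueHyp G₁ f₁ F₁ G₂ f₂ F₂ G) {W : Finset V}
    {u v : ((W : Finset V) : Set V)}
    {x y : ((preE f₁ W : Finset V₁) : Set V₁)}
    (hx : f₁ ↑x = ↑u) (hy : f₁ ↑y = ↑v)
    (hr : (G.induce ((W : Finset V) : Set V)).Reachable u v) :
    (G₁.induce ((preE f₁ W : Finset V₁) : Set V₁)).Reachable x y := by
  have hc := key h hr
  rw [← hx, ← hy] at hc
  rcases hc with (⟨x', y', hxy, hx', hy'⟩ | ⟨x', c, d, y', hx', hy', hcF, hdF, r1, r2⟩) |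
    (⟨x', y', hxy, hx', hy'⟩ | ⟨x', c, d, y', hx', hy', hcF, hdF, r2, r1⟩)
  · have e1 : x' = x := Subtype.ext (f₁.injective hx')
    have e2 : y' = y := Subtype.ext (f₁.injective hy')
    exact e1 ▸ e2 ▸ hxy
  · have e1 : x' = x := Subtype.ext (f₁.injective hx')
    have hyF : (↑y : V₁) ∈ F₁ := h.mem1 ↑y ↑y' hy'
    exact (e1 ▸ r1).trans (clique_reach h.clique1 c y hcF hyF)
  · have hxF : (↑x : V₁) ∈ F₁ := h.mem1 ↑x ↑x' hx'
    have hyF : (↑y : V₁) ∈ F₁ := h.mem1 ↑y ↑y' hy'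
    exact clique_reach h.clique1 x y hxF hyF
  · have hxF : (↑x : V₁) ∈ F₁ := h.mem1 ↑x ↑x' hx'
    have e2 : y' = y := Subtype.ext (f₁.injective hy')
    exact (clique_reach h.clique1 x d hxF hdF).trans (e2 ▸ r1)

lemma reach_mix (h : GlueHyp G₁ f₁ F₁ G₂ f₂ F₂ G) {W : Finset V}
    {u v : ((W : Finset V) : Set V)}
    {x : ((preE f₁ W : Finset V₁) : Set V₁)} {y : ((preE f₂ W : Finset V₂) : Set V₂)}
    (hx : f₁ ↑x = ↑u) (hy : f₂ ↑y = ↑v)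
    (hr : (G.induce ((W : Finset V) : Set V)).Reachable u v) :
    (∃ c : ((preE f₁ W : Finset V₁) : Set V₁), ↑c ∈ F₁ ∧
      (G₁.induce ((preE f₁ W : Finset V₁) : Set V₁)).Reachable x c) ∧
    (∃ d : ((preE f₂ W : Finset V₂) : Set V₂), ↑d ∈ F₂ ∧
      (G₂.induce ((preE f₂ W : Finset V₂) : Set V₂)).Reachable d y) := by
  have hc := key h hr
  rw [← hx, ← hy] at hc
  rcases hc with (⟨x', y', hxy, hx', hy'⟩ | ⟨x', c, d, y', hx', hy', hcF, hdF, r1, r2⟩) |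
    (⟨x', y', hxy, hx', hy'⟩ | ⟨x', c, d, y', hx', hy', hcF, hdF, r2, r1⟩)
  · -- pure side 1; endpoint v = f₁ y' = f₂ y is in the clique
    have e1 : x' = x := Subtype.ext (f₁.injective hx')
    have hyF1 : (↑y' : V₁) ∈ F₁ := h.mem1 ↑y' ↑y hy'.symm
    have hyF2 : (↑y : V₂) ∈ F₂ := h.mem2 ↑y ↑y' hy'
    exact ⟨⟨y', hyF1, e1 ▸ hxy⟩, ⟨y, hyF2, Reachable.refl _⟩⟩
  · have e1 : x' = x := Subtype.ext (f₁.injective hx')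
    have e2 : y' = y := Subtype.ext (f₂.injective hy')
    exact ⟨⟨c, hcF, e1 ▸ r1⟩, ⟨d, hdF, e2 ▸ r2⟩⟩
  · -- pure side 2; endpoint u is in the clique
    have hxF1 : (↑x : V₁) ∈ F₁ := h.mem1 ↑x ↑x' hx'
    have hxF2 : (↑x' : V₂) ∈ F₂ := h.mem2 ↑x' ↑x hx'.symm
    have e2 : y' = y := Subtype.ext (f₂.injective hy')
    exact ⟨⟨x, hxF1, Reachable.refl _⟩, ⟨x', hxF2, e2 ▸ hxy⟩⟩
  · -- u in clique, v reached on side 1 hence in clique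
    have hxF1 : (↑x : V₁) ∈ F₁ := h.mem1 ↑x ↑x' hx'
    have hyF2 : (↑y : V₂) ∈ F₂ := h.mem2 ↑y ↑y' hy'
    exact ⟨⟨x, hxF1, Reachable.refl _⟩, ⟨y, hyF2, Reachable.refl _⟩⟩

lemma card_ne_add_one {α : Type*} [Finite α] (a : α) :
    Nat.card α = Nat.card {c : α // c ≠ a} + 1 := by
  classical
  rw [← Nat.card_congr (Equiv.sumCompl (· = a)), Nat.card_sum]
  simp [Nat.card_eq_one_iff_unique]
  omega

variable [Fintype V₁] [Fintype V₂] [Fintype V]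

/-- the side-1 inclusion hom -/
def hom₁ (h : ∀ x y, G₁.Adj x y → G.Adj (f₁ x) (f₁ y)) (W : Finset V) :
    G₁.induce ((preE f₁ W : Finset V₁) : Set V₁) →g G.induce ((W : Finset V) : Set V) where
  toFun := fun x => ⟨f₁ ↑x, Finset.mem_coe.2 (mem_preE.1 (Finset.mem_coe.1 x.2))⟩
  map_rel' := fun {x y} a => h ↑x ↑y a

lemma glue_adj1 (h : GlueHyp G₁ f₁ F₁ G₂ f₂ F₂ G) :
    ∀ x y, G₁.Adj x y → G.Adj (f₁ x) (f₁ y) :=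
  fun x y a => (h.adj _ _).2 (Or.inl ⟨x, y, a, rfl, rfl⟩)

lemma count (h : GlueHyp G₁ f₁ F₁ G₂ f₂ F₂ G)
    (hm1 : ∀ x ∈ F₁, ∃ y, f₂ y = f₁ x) (hm2 : ∀ y ∈ F₂, ∃ x, f₁ x = f₂ y)
    (W : Finset V) :
    Nat.card (G.induce ((W : Finset V) : Set V)).ConnectedComponent
      + (if (W ∩ F₁.image ⇑f₁).Nonempty then 1 else 0)
    = Nat.card (G₁.induce ((preE f₁ W : Finset V₁) : Set V₁)).ConnectedComponent
      + Nat.card (G₂.induce ((preE f₂ W : Finset V₂) : Set V₂)).ConnectedComponent := by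
  classical
  set H := G.induce ((W : Finset V) : Set V)
  set H₁ := G₁.induce ((preE f₁ W : Finset V₁) : Set V₁)
  set H₂ := G₂.induce ((preE f₂ W : Finset V₂) : Set V₂)
  let ψ₁ := hom₁ (glue_adj1 h) W
  let ψ₂ := hom₁ (glue_adj1 h.symm) W
  let φ₁ : H₁.ConnectedComponent → H.ConnectedComponent := ConnectedComponent.map ψ₁
  let φ₂ : H₂.ConnectedComponent → H.ConnectedComponent := ConnectedComponent.map ψ₂
  by_cases hne : (W ∩ F₁.image ⇑f₁).Nonempty
  · obtain ⟨w₀, hw₀⟩ := hne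
    obtain ⟨hw₀W, hw₀C⟩ := Finset.mem_inter.1 hw₀
    obtain ⟨x₀, hx₀F, hfx₀⟩ := Finset.mem_image.1 hw₀C
    obtain ⟨y₀, hfy₀⟩ := hm1 x₀ hx₀F
    have hy₀F : y₀ ∈ F₂ := h.mem2 y₀ x₀ hfy₀.symm
    have hx₀W : x₀ ∈ preE f₁ W := mem_preE.2 (hfx₀ ▸ hw₀W)
    have hy₀W : y₀ ∈ preE f₂ W := mem_preE.2 (by rw [hfy₀, hfx₀]; exact hw₀W)
    let x₀' : ((preE f₁ W : Finset V₁) : Set V₁) := ⟨x₀, Finset.mem_coe.2 hx₀W⟩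
    let y₀' : ((preE f₂ W : Finset V₂) : Set V₂) := ⟨y₀, Finset.mem_coe.2 hy₀W⟩
    let c₀ : H₂.ConnectedComponent := H₂.connectedComponentMk y₀'
    let Φ : H₁.ConnectedComponent ⊕ {c : H₂.ConnectedComponent // c ≠ c₀} →
        H.ConnectedComponent := Sum.elim φ₁ (fun c => φ₂ c.1)
    have hbij : Function.Bijective Φ := by
      constructor
      · rintro (c | ⟨c, hc⟩) (d | ⟨d, hd⟩) hcd
        · obtain ⟨x, rfl⟩ := c.exists_rep
          obtain ⟨y, rfl⟩ := d.exists_rep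
          simp only [Φ, φ₁, Sum.elim_inl, ConnectedComponent.map_mk] at hcd
          have hr : H.Reachable (ψ₁ x) (ψ₁ y) := ConnectedComponent.eq.1 hcd
          have := reach_side1 h (x := x) (y := y) rfl rfl hr
          exact congrArg Sum.inl (ConnectedComponent.eq.2 this)
        · obtain ⟨x, rfl⟩ := c.exists_rep
          obtain ⟨y, hy⟩ := d.exists_rep
          subst hy
          simp only [Φ, φ₁, φ₂, Sum.elim_inl, Sum.elim_inr, ConnectedComponent.map_mk] at hcd
          have hr : H.Reachable (ψ₁ x) (ψ₂ y) := ConnectedComponent.eq.1 hcd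
          obtain ⟨-, ⟨e, heF, hre⟩⟩ := reach_mix h (x := x) (y := y) rfl rfl hr
          exact absurd (ConnectedComponent.eq.2
            ((clique_reach h.clique2 y₀' e hy₀F heF).trans hre).symm) hd
        · obtain ⟨x, hx⟩ := c.exists_rep
          subst hx
          obtain ⟨y, rfl⟩ := d.exists_rep
          simp only [Φ, φ₁, φ₂, Sum.elim_inl, Sum.elim_inr, ConnectedComponent.map_mk] at hcd
          have hr : H.Reachable (ψ₁ y) (ψ₂ x) := (ConnectedComponent.eq.1 hcd).symm
          obtain ⟨-, ⟨e, heF, hre⟩⟩ := reach_mix h (x := y) (y := x) rfl rfl hr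
          exact absurd (ConnectedComponent.eq.2
            ((clique_reach h.clique2 y₀' e hy₀F heF).trans hre).symm) hc
        · obtain ⟨x, hx⟩ := c.exists_rep
          subst hx
          obtain ⟨y, hy⟩ := d.exists_rep
          subst hy
          simp only [Φ, φ₂, Sum.elim_inr, ConnectedComponent.map_mk] at hcd
          have hr : H.Reachable (ψ₂ x) (ψ₂ y) := ConnectedComponent.eq.1 hcd
          have := reach_side1 h.symm (x := x) (y := y) rfl rfl hr
          exact congrArg Sum.inr (Subtype.ext (ConnectedComponent.eq.2 this))
      · intro c
        obtain ⟨w, rfl⟩ := c.exists_rep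
        rcases h.cov ↑w with ⟨x, hx⟩ | ⟨y, hy⟩
        · have hxW : x ∈ preE f₁ W := mem_preE.2 (hx ▸ Finset.mem_coe.1 w.2)
          refine ⟨Sum.inl (H₁.connectedComponentMk ⟨x, Finset.mem_coe.2 hxW⟩), ?_⟩
          simp only [Φ, φ₁, Sum.elim_inl, ConnectedComponent.map_mk]
          exact congrArg _ (Subtype.ext hx)
        · have hyW : y ∈ preE f₂ W := mem_preE.2 (hy ▸ Finset.mem_coe.1 w.2)
          let y' : ((preE f₂ W : Finset V₂) : Set V₂) := ⟨y, Finset.mem_coe.2 hyW⟩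
          by_cases hcc : H₂.connectedComponentMk y' = c₀
          · have hr2 : H₂.Reachable y' y₀' := ConnectedComponent.eq.1 hcc
            have hrW : H.Reachable (ψ₂ y') (ψ₂ y₀') := hr2.map ψ₂
            refine ⟨Sum.inl (H₁.connectedComponentMk x₀'), ?_⟩
            simp only [Φ, φ₁, Sum.elim_inl, ConnectedComponent.map_mk]
            have e1 : ψ₁ x₀' = ψ₂ y₀' := Subtype.ext (by
              show f₁ x₀ = f₂ y₀
              rw [hfy₀])
            have e2 : ψ₂ y' = w := Subtype.ext hy
            rw [e1, ← e2]
            exact ConnectedComponent.eq.2 hrW.symm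
          · refine ⟨Sum.inr ⟨H₂.connectedComponentMk y', hcc⟩, ?_⟩
            simp only [Φ, φ₂, Sum.elim_inr, ConnectedComponent.map_mk]
            exact congrArg _ (Subtype.ext hy)
    have hcard := Nat.card_eq_of_bijective Φ hbij
    rw [Nat.card_sum] at hcard
    have h2 := card_ne_add_one c₀
    rw [if_pos ⟨w₀, hw₀⟩]
    omega
  · let Φ : H₁.ConnectedComponent ⊕ H₂.ConnectedComponent → H.ConnectedComponent :=
      Sum.elim φ₁ φ₂
    have hbij : Function.Bijective Φ := by
      constructor
      · rintro (c | c) (d | d) hcd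
        · obtain ⟨x, rfl⟩ := c.exists_rep
          obtain ⟨y, rfl⟩ := d.exists_rep
          simp only [Φ, φ₁, Sum.elim_inl, ConnectedComponent.map_mk] at hcd
          have hr : H.Reachable (ψ₁ x) (ψ₁ y) := ConnectedComponent.eq.1 hcd
          exact congrArg Sum.inl (ConnectedComponent.eq.2 (reach_side1 h rfl rfl hr))
        · obtain ⟨x, rfl⟩ := c.exists_rep
          obtain ⟨y, rfl⟩ := d.exists_rep
          simp only [Φ, φ₁, φ₂, Sum.elim_inl, Sum.elim_inr, ConnectedComponent.map_mk] at hcd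
          have hr : H.Reachable (ψ₁ x) (ψ₂ y) := ConnectedComponent.eq.1 hcd
          obtain ⟨-, ⟨e, heF, hre⟩⟩ := reach_mix h (x := x) (y := y) rfl rfl hr
          obtain ⟨z, hz⟩ := hm2 ↑e heF
          have hzF : z ∈ F₁ := h.mem1 z ↑e hz.symm
          exact absurd ⟨f₂ ↑e, Finset.mem_inter.2
            ⟨mem_preE.1 (Finset.mem_coe.1 e.2), Finset.mem_image.2 ⟨z, hzF, hz⟩⟩⟩ hne
        · obtain ⟨x, rfl⟩ := c.exists_rep
          obtain ⟨y, rfl⟩ := d.exists_rep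
          simp only [Φ, φ₁, φ₂, Sum.elim_inl, Sum.elim_inr, ConnectedComponent.map_mk] at hcd
          have hr : H.Reachable (ψ₁ y) (ψ₂ x) := (ConnectedComponent.eq.1 hcd).symm
          obtain ⟨-, ⟨e, heF, hre⟩⟩ := reach_mix h (x := y) (y := x) rfl rfl hr
          obtain ⟨z, hz⟩ := hm2 ↑e heF
          have hzF : z ∈ F₁ := h.mem1 z ↑e hz.symm
          exact absurd ⟨f₂ ↑e, Finset.mem_inter.2
            ⟨mem_preE.1 (Finset.mem_coe.1 e.2), Finset.mem_image.2 ⟨z, hzF, hz⟩⟩⟩ hne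
        · obtain ⟨x, rfl⟩ := c.exists_rep
          obtain ⟨y, rfl⟩ := d.exists_rep
          simp only [Φ, φ₂, Sum.elim_inr, ConnectedComponent.map_mk] at hcd
          have hr : H.Reachable (ψ₂ x) (ψ₂ y) := ConnectedComponent.eq.1 hcd
          exact congrArg Sum.inr (ConnectedComponent.eq.2 (reach_side1 h.symm rfl rfl hr))
      · intro c
        obtain ⟨w, rfl⟩ := c.exists_rep
        rcases h.cov ↑w with ⟨x, hx⟩ | ⟨y, hy⟩
        · have hxW : x ∈ preE f₁ W := mem_preE.2 (hx ▸ Finset.mem_coe.1 w.2)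
          refine ⟨Sum.inl (H₁.connectedComponentMk ⟨x, Finset.mem_coe.2 hxW⟩), ?_⟩
          simp only [Φ, φ₁, Sum.elim_inl, ConnectedComponent.map_mk]
          exact congrArg _ (Subtype.ext hx)
        · have hyW : y ∈ preE f₂ W := mem_preE.2 (hy ▸ Finset.mem_coe.1 w.2)
          refine ⟨Sum.inr (H₂.connectedComponentMk ⟨y, Finset.mem_coe.2 hyW⟩), ?_⟩
          simp only [Φ, φ₂, Sum.elim_inr, ConnectedComponent.map_mk]
          exact congrArg _ (Subtype.ext hy)
    have hcard := Nat.card_eq_of_bijective Φ hbij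
    rw [Nat.card_sum] at hcard
    rw [if_neg hne]
    omega

lemma image_preE (f : V₁ ↪ V) (W : Finset V) [Fintype V₁] :
    (preE f W).image ⇑f = W ∩ ((univ : Finset V₁).image ⇑f) := by
  ext a
  simp only [Finset.mem_image, Finset.mem_inter, mem_preE]
  constructor
  · rintro ⟨x, hx, rfl⟩
    exact ⟨hx, x, Finset.mem_univ x, rfl⟩
  · rintro ⟨ha, x, -, rfl⟩
    exact ⟨x, ha, rfl⟩

lemma card_preE (f : V₁ ↪ V) (W : Finset V) [Fintype V₁] :
    (preE f W).card = (W ∩ ((univ : Finset V₁).image ⇑f)).card := by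
  rw [← image_preE, Finset.card_image_of_injective _ f.injective]

lemma preE_union (f : V₁ ↪ V) (X Y : Finset V) :
    preE f (X ∪ Y) = preE f X ∪ preE f Y := by
  ext x; simp [mem_preE]

lemma preE_image (f : V₁ ↪ V) (S : Finset V₁) : preE f (S.image ⇑f) = S := by
  ext x
  simp only [mem_preE, Finset.mem_image]
  exact ⟨fun ⟨y, hy, hxy⟩ => f.injective hxy ▸ hy, fun hx => ⟨x, hx, rfl⟩⟩

lemma preE_of_disj (f : V₁ ↪ V) [Fintype V₁] (U : Finset V)
    (hU : U ⊆ (univ : Finset V) \ ((univ : Finset V₁).image ⇑f)) : preE f U = ∅ := by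
  ext x
  simp only [mem_preE, Finset.notMem_empty, iff_false]
  intro hx
  exact (Finset.mem_sdiff.1 (hU hx)).2 (Finset.mem_image.2 ⟨x, Finset.mem_univ x, rfl⟩)

lemma sum_over_subsets [Fintype V₁] [Fintype V] (f : V₁ ↪ V) (k : ℕ) (g : Finset V₁ → ℤ) :
    ∑ W ∈ Finset.powersetCard k (Finset.univ : Finset V), g (preE f W)
      = ∑ i ∈ Finset.range (k+1),
          (∑ S ∈ Finset.powersetCard i (Finset.univ : Finset V₁), g S) *
            (((univ : Finset V) \ ((univ : Finset V₁).image ⇑f)).card.choose (k - i)) := by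
  classical
  set A := (univ : Finset V₁).image ⇑f with hA
  rw [← Finset.sum_fiberwise_of_maps_to (g := fun W => (preE f W).card)
    (t := Finset.range (k+1)) (fun W hW => by
      rw [Finset.mem_range, Nat.lt_succ_iff]
      show (preE f W).card ≤ k
      rw [card_preE]
      calc (W ∩ A).card ≤ W.card := Finset.card_le_card Finset.inter_subset_left
        _ = k := (Finset.mem_powersetCard.1 hW).2)]
  refine Finset.sum_congr rfl (fun i hi => ?_)
  have hik : i ≤ k := Nat.lt_succ_iff.1 (Finset.mem_range.1 hi)
  rw [Finset.sum_nbij' (i := fun W => (preE f W, W \ A))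
    (j := fun p => p.1.image ⇑f ∪ p.2)
    (t := (Finset.powersetCard i (univ : Finset V₁)) ×ˢ
      (Finset.powersetCard (k - i) ((univ : Finset V) \ A)))
    (g := fun p => g p.1)
    (by
      intro W hW
      obtain ⟨hWk, hWi⟩ := Finset.mem_filter.1 hW
      have hWi' : (preE f W).card = i := hWi
      obtain ⟨-, hWcard⟩ := Finset.mem_powersetCard.1 hWk
      refine Finset.mem_product.2 ⟨Finset.mem_powersetCard.2 ⟨Finset.subset_univ _, hWi⟩,
        Finset.mem_powersetCard.2 ⟨Finset.sdiff_subset_sdiff (Finset.subset_univ _) le_rfl, ?_⟩⟩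
      have h1 : (W \ A).card + (W ∩ A).card = W.card := Finset.card_sdiff_add_card_inter W A
      have h2 : (W ∩ A).card = i := by rw [← card_preE]; exact hWi'
      show (W \ A).card = k - i
      omega)
    (by
      intro p hp
      obtain ⟨hp1, hp2⟩ := Finset.mem_product.1 hp
      obtain ⟨-, hc1⟩ := Finset.mem_powersetCard.1 hp1
      obtain ⟨hs2, hc2⟩ := Finset.mem_powersetCard.1 hp2
      have hdisj : Disjoint (p.1.image ⇑f) p.2 := by
        refine Finset.disjoint_left.2 (fun a ha hb => ?_)
        have := Finset.mem_sdiff.1 (hs2 hb)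
        exact this.2 (by
          obtain ⟨x, -, rfl⟩ := Finset.mem_image.1 ha
          exact Finset.mem_image.2 ⟨x, Finset.mem_univ x, rfl⟩)
      refine Finset.mem_filter.2 ⟨Finset.mem_powersetCard.2 ⟨Finset.subset_univ _, ?_⟩, ?_⟩
      · rw [Finset.card_union_of_disjoint hdisj,
          Finset.card_image_of_injective _ f.injective, hc1, hc2]
        omega
      · rw [preE_union, preE_image, preE_of_disj f p.2 hs2, Finset.union_empty, hc1])
    (by
      intro W hW
      dsimp only
      rw [image_preE]
      exact sup_inf_sdiff W A)
    (by
      intro p hp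
      obtain ⟨hp1, hp2⟩ := Finset.mem_product.1 hp
      obtain ⟨hs2, -⟩ := Finset.mem_powersetCard.1 hp2
      have h1 : preE f (p.1.image ⇑f ∪ p.2) = p.1 := by
        rw [preE_union, preE_image, preE_of_disj f p.2 hs2, Finset.union_empty]
      have h2 : (p.1.image ⇑f ∪ p.2) \ A = p.2 := by
        rw [Finset.union_sdiff_distrib]
        have e1 : p.1.image ⇑f \ A = ∅ := by
          rw [Finset.sdiff_eq_empty_iff_subset]
          intro a ha
          obtain ⟨x, -, rfl⟩ := Finset.mem_image.1 ha
          exact Finset.mem_image.2 ⟨x, Finset.mem_univ x, rfl⟩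
        have e2 : p.2 \ A = p.2 := by
          refine Finset.sdiff_eq_self_of_disjoint (Finset.disjoint_left.2 fun a ha hb => ?_)
          exact (Finset.mem_sdiff.1 (hs2 ha)).2 hb
        rw [e1, e2, Finset.empty_union]
      exact Prod.ext h1 h2)
    (fun W hW => rfl)]
  rw [Finset.sum_product]
  simp only [Finset.sum_const, Finset.card_powersetCard, nsmul_eq_mul]
  rw [← Finset.mul_sum]
  ring

lemma count_empty_inter [Fintype V] (C : Finset V) (k : ℕ) :
    ∑ W ∈ Finset.powersetCard k (Finset.univ : Finset V),
        (if (W ∩ C).Nonempty then (0:ℤ) else 1)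
      = (((univ : Finset V) \ C).card.choose k) := by
  classical
  have : ∀ W : Finset V, (if (W ∩ C).Nonempty then (0:ℤ) else 1)
      = (if ¬(W ∩ C).Nonempty then (1:ℤ) else 0) := by
    intro W; split_ifs <;> simp_all
  simp_rw [this]
  rw [Finset.sum_boole]
  have : Finset.filter (fun W => ¬(W ∩ C).Nonempty)
      (Finset.powersetCard k (Finset.univ : Finset V))
      = Finset.powersetCard k ((univ : Finset V) \ C) := by
    ext W
    simp only [Finset.mem_filter, Finset.mem_powersetCard, Finset.not_nonempty_iff_eq_empty,
      ← Finset.disjoint_iff_inter_eq_empty, Finset.subset_sdiff]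
    tauto
  rw [this, Finset.card_powersetCard]

end Aux

section Bridge
open SimpleGraph

lemma restrictGraph_eq {V : Type} [DecidableEq V] (Δ : SimpComplex V) (W : Finset V) :
    Δ.restrictGraph W = Δ.skeleton.induce ((W : Finset V) : Set V) := by
  ext a b
  show a ≠ b ∧ _ ↔ Δ.skeleton.Adj ↑a ↑b
  constructor
  · rintro ⟨hne, (⟨F, hF, hFW⟩ | ⟨F, hF, hFW⟩)⟩
    · exact ⟨fun hh => hne (Subtype.ext hh),
        Δ.down_closed F hF _ (hFW ▸ Finset.inter_subset_left)⟩
    · refine ⟨fun hh => hne (Subtype.ext hh), Δ.down_closed F hF _ ?_⟩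
      rw [Finset.pair_comm]
      exact hFW ▸ Finset.inter_subset_left
  · rintro ⟨hne, hmem⟩
    refine ⟨fun hh => hne (congrArg _ hh),
      Or.inl ⟨{(a : V), (b : V)}, hmem, Finset.inter_eq_left.2 ?_⟩⟩
    rw [Finset.insert_subset_iff, Finset.singleton_subset_iff]
    exact ⟨Finset.mem_coe.1 a.2, Finset.mem_coe.1 b.2⟩

lemma complexB_eq_skel {V : Type} [Fintype V] [DecidableEq V] (k : ℕ) (Δ : SimpComplex V) :
    complexB k Δ = ∑ W ∈ Finset.powersetCard k (Finset.univ : Finset V),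
      ((Nat.card (Δ.skeleton.induce ((W : Finset V) : Set V)).ConnectedComponent : ℤ) - 1) := by
  refine Finset.sum_congr rfl (fun W _ => ?_)
  rw [restrictGraph_eq]

end Bridge
/-- the formula for `b_k` of a `t`-connected sum (`t ≥ 3`) of two simplicial
complexes on `n₁` and `n₂` vertices. -/
theorem bk_complex_connSum {V₁ V₂ V : Type}
    [Fintype V₁] [DecidableEq V₁] [Fintype V₂] [DecidableEq V₂] [Fintype V] [DecidableEq V]
    (t k n₁ n₂ : ℕ) (ht : 3 ≤ t)
    (Δ₁ : SimpComplex V₁) (Δ₂ : SimpComplex V₂) (Δ : SimpComplex V)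
    (hn₁ : Fintype.card V₁ = n₁) (hn₂ : Fintype.card V₂ = n₂)
    (h : IsConnSumC t Δ₁ Δ₂ Δ) :
    complexB k Δ =
      (∑ i ∈ Finset.range (k + 1),
        (complexB i Δ₁ * ((n₂ - t).choose (k - i)) +
         complexB i Δ₂ * ((n₁ - t).choose (k - i))))
      + ((n₁ + n₂ - 2 * t).choose k) := by
  classical
  obtain ⟨f₁, f₂, F₁, F₂, hc₁, hc₂, hF₁m, hF₂m, hmax₁, hmax₂, hcov, hint, hFF, hfaces⟩ := h
  set G₁ := Δ₁.skeleton with hG₁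
  set G₂ := Δ₂.skeleton with hG₂
  set G := Δ.skeleton with hG
  have hCcard : (F₁.image ⇑f₁).card = t := by
    rw [Finset.card_image_of_injective _ f₁.injective, hc₁]
  have hadj : ∀ a b, G.Adj a b ↔
      (∃ x y, G₁.Adj x y ∧ f₁ x = a ∧ f₁ y = b) ∨
      (∃ x y, G₂.Adj x y ∧ f₂ x = a ∧ f₂ y = b) := by
    intro a b
    constructor
    · rintro ⟨hne, hab⟩
      rw [hfaces, Finset.mem_sdiff] at hab
      obtain ⟨hab, -⟩ := hab
      rcases Finset.mem_union.1 hab with hmem | hmem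
      · obtain ⟨F, hF, hFim⟩ := Finset.mem_image.1 hmem
        have ha : a ∈ F.image ⇑f₁ := by rw [hFim]; exact Finset.mem_insert_self _ _
        have hb : b ∈ F.image ⇑f₁ := by
          rw [hFim]; exact Finset.mem_insert_of_mem (Finset.mem_singleton_self _)
        obtain ⟨x, hxF, rfl⟩ := Finset.mem_image.1 ha
        obtain ⟨y, hyF, rfl⟩ := Finset.mem_image.1 hb
        have hxy : x ≠ y := fun hh => hne (by rw [hh])
        refine Or.inl ⟨x, y, ⟨hxy, Δ₁.down_closed F hF _ ?_⟩, rfl, rfl⟩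
        rw [Finset.insert_subset_iff, Finset.singleton_subset_iff]
        exact ⟨hxF, hyF⟩
      · obtain ⟨F, hF, hFim⟩ := Finset.mem_image.1 hmem
        have ha : a ∈ F.image ⇑f₂ := by rw [hFim]; exact Finset.mem_insert_self _ _
        have hb : b ∈ F.image ⇑f₂ := by
          rw [hFim]; exact Finset.mem_insert_of_mem (Finset.mem_singleton_self _)
        obtain ⟨x, hxF, rfl⟩ := Finset.mem_image.1 ha
        obtain ⟨y, hyF, rfl⟩ := Finset.mem_image.1 hb
        have hxy : x ≠ y := fun hh => hne (by rw [hh])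
        refine Or.inr ⟨x, y, ⟨hxy, Δ₂.down_closed F hF _ ?_⟩, rfl, rfl⟩
        rw [Finset.insert_subset_iff, Finset.singleton_subset_iff]
        exact ⟨hxF, hyF⟩
    · rintro (⟨x, y, ⟨hxy, hmem⟩, rfl, rfl⟩ | ⟨x, y, ⟨hxy, hmem⟩, rfl, rfl⟩)
      · have hne : f₁ x ≠ f₁ y := fun hh => hxy (f₁.injective hh)
        refine ⟨hne, ?_⟩
        rw [hfaces, Finset.mem_sdiff]
        refine ⟨Finset.mem_union_left _ (Finset.mem_image.2 ⟨{x, y}, hmem, ?_⟩), ?_⟩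
        · rw [Finset.image_insert, Finset.image_singleton]
        · rw [Finset.mem_singleton]
          intro hh
          have h2 : ({f₁ x, f₁ y} : Finset V).card = 2 := Finset.card_pair hne
          rw [hh, hCcard] at h2
          omega
      · have hne : f₂ x ≠ f₂ y := fun hh => hxy (f₂.injective hh)
        refine ⟨hne, ?_⟩
        rw [hfaces, Finset.mem_sdiff]
        refine ⟨Finset.mem_union_right _ (Finset.mem_image.2 ⟨{x, y}, hmem, ?_⟩), ?_⟩
        · rw [Finset.image_insert, Finset.image_singleton]
        · rw [Finset.mem_singleton]
          intro hh
          have h2 : ({f₂ x, f₂ y} : Finset V).card = 2 := Finset.card_pair hne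
          rw [hh, hCcard] at h2
          omega
  have hyp : GlueHyp G₁ f₁ F₁ G₂ f₂ F₂ G := by
    refine ⟨?_, ?_, ?_, ?_, ?_, hadj⟩
    · intro a
      have : a ∈ Set.range ⇑f₁ ∪ Set.range ⇑f₂ := by rw [hcov]; trivial
      rcases this with ⟨x, hx⟩ | ⟨y, hy⟩
      · exact Or.inl ⟨x, hx⟩
      · exact Or.inr ⟨y, hy⟩
    · intro x y hxy
      have hmem : f₁ x ∈ Set.range ⇑f₁ ∩ Set.range ⇑f₂ := ⟨⟨x, rfl⟩, ⟨y, hxy⟩⟩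
      rw [hint] at hmem
      obtain ⟨x', hx', heq⟩ := Finset.mem_image.1 (Finset.mem_coe.1 hmem)
      exact f₁.injective heq ▸ hx'
    · intro y x hxy
      have hmem : f₂ y ∈ Set.range ⇑f₁ ∩ Set.range ⇑f₂ := ⟨⟨x, hxy⟩, ⟨y, rfl⟩⟩
      rw [hint] at hmem
      have h2 : f₂ y ∈ F₂.image ⇑f₂ := by rw [← hFF]; exact Finset.mem_coe.1 hmem
      obtain ⟨y', hy', heq⟩ := Finset.mem_image.1 h2
      exact f₂.injective heq ▸ hy'
    · intro x hx y hy hne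
      refine ⟨hne, Δ₁.down_closed F₁ hF₁m _ ?_⟩
      rw [Finset.insert_subset_iff, Finset.singleton_subset_iff]
      exact ⟨hx, hy⟩
    · intro x hx y hy hne
      refine ⟨hne, Δ₂.down_closed F₂ hF₂m _ ?_⟩
      rw [Finset.insert_subset_iff, Finset.singleton_subset_iff]
      exact ⟨hx, hy⟩
  have hm1 : ∀ x ∈ F₁, ∃ y, f₂ y = f₁ x := by
    intro x hx
    have : f₁ x ∈ F₂.image ⇑f₂ := by rw [← hFF]; exact Finset.mem_image_of_mem _ hx
    obtain ⟨y, -, hy⟩ := Finset.mem_image.1 this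
    exact ⟨y, hy⟩
  have hm2 : ∀ y ∈ F₂, ∃ x, f₁ x = f₂ y := by
    intro y hy
    have : f₂ y ∈ F₁.image ⇑f₁ := by rw [hFF]; exact Finset.mem_image_of_mem _ hy
    obtain ⟨x, -, hx⟩ := Finset.mem_image.1 this
    exact ⟨x, hx⟩
  -- cardinalities
  have hA1 : ((Finset.univ : Finset V₁).image ⇑f₁).card = n₁ := by
    rw [Finset.card_image_of_injective _ f₁.injective, Finset.card_univ, hn₁]
  have hA2 : ((Finset.univ : Finset V₂).image ⇑f₂).card = n₂ := by
    rw [Finset.card_image_of_injective _ f₂.injective, Finset.card_univ, hn₂]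
  have hU : ((Finset.univ : Finset V₁).image ⇑f₁) ∪ ((Finset.univ : Finset V₂).image ⇑f₂)
      = (Finset.univ : Finset V) := by
    refine Finset.eq_univ_iff_forall.2 (fun a => ?_)
    rcases hyp.cov a with ⟨x, hx⟩ | ⟨y, hy⟩
    · exact Finset.mem_union_left _ (Finset.mem_image.2 ⟨x, Finset.mem_univ x, hx⟩)
    · exact Finset.mem_union_right _ (Finset.mem_image.2 ⟨y, Finset.mem_univ y, hy⟩)
  have hI : ((Finset.univ : Finset V₁).image ⇑f₁) ∩ ((Finset.univ : Finset V₂).image ⇑f₂)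
      = F₁.image ⇑f₁ := by
    ext a
    constructor
    · intro ha
      obtain ⟨h1, h2⟩ := Finset.mem_inter.1 ha
      obtain ⟨x, -, rfl⟩ := Finset.mem_image.1 h1
      obtain ⟨y, -, hy⟩ := Finset.mem_image.1 h2
      have hmem : f₁ x ∈ Set.range ⇑f₁ ∩ Set.range ⇑f₂ := ⟨⟨x, rfl⟩, ⟨y, hy⟩⟩
      rw [hint] at hmem
      exact Finset.mem_coe.1 hmem
    · intro ha
      have hmem : a ∈ Set.range ⇑f₁ ∩ Set.range ⇑f₂ := by
        rw [hint]; exact Finset.mem_coe.2 ha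
      obtain ⟨⟨x, hx⟩, ⟨y, hy⟩⟩ := hmem
      exact Finset.mem_inter.2 ⟨Finset.mem_image.2 ⟨x, Finset.mem_univ x, hx⟩,
        Finset.mem_image.2 ⟨y, Finset.mem_univ y, hy⟩⟩
  have hVt : Fintype.card V + t = n₁ + n₂ := by
    have hcui := Finset.card_union_add_card_inter
      ((Finset.univ : Finset V₁).image ⇑f₁) ((Finset.univ : Finset V₂).image ⇑f₂)
    rw [hU, hI, hCcard, hA1, hA2, Finset.card_univ] at hcui
    exact hcui
  have hn1le : n₁ ≤ Fintype.card V := hn₁ ▸ Fintype.card_le_of_embedding f₁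
  have hn2le : n₂ ≤ Fintype.card V := hn₂ ▸ Fintype.card_le_of_embedding f₂
  have htle : t ≤ Fintype.card V := by
    rw [← hCcard, ← Finset.card_univ]
    exact Finset.card_le_univ _
  have hcompl1 : ((Finset.univ : Finset V) \ ((Finset.univ : Finset V₁).image ⇑f₁)).card
      = n₂ - t := by
    rw [Finset.card_sdiff_of_subset (Finset.subset_univ _), Finset.card_univ, hA1]
    omega
  have hcompl2 : ((Finset.univ : Finset V) \ ((Finset.univ : Finset V₂).image ⇑f₂)).card
      = n₁ - t := by
    rw [Finset.card_sdiff_of_subset (Finset.subset_univ _), Finset.card_univ, hA2]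
    omega
  have hcomplC : ((Finset.univ : Finset V) \ (F₁.image ⇑f₁)).card = n₁ + n₂ - 2 * t := by
    rw [Finset.card_sdiff_of_subset (Finset.subset_univ _), Finset.card_univ, hCcard]
    omega
  -- main computation
  rw [complexB_eq_skel]
  have hpoint : ∀ W ∈ Finset.powersetCard k (Finset.univ : Finset V),
      ((Nat.card (G.induce ((W : Finset V) : Set V)).ConnectedComponent : ℤ) - 1)
      = (((Nat.card (G₁.induce ((preE f₁ W : Finset V₁) : Set V₁)).ConnectedComponent : ℤ) - 1)
        + ((Nat.card (G₂.induce ((preE f₂ W : Finset V₂) : Set V₂)).ConnectedComponent : ℤ) - 1))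
        + (if (W ∩ F₁.image ⇑f₁).Nonempty then (0:ℤ) else 1) := by
    intro W _hW
    have hcnt := count hyp hm1 hm2 W
    split_ifs at hcnt ⊢ with hif
    · omega
    · omega
  rw [Finset.sum_congr rfl hpoint, Finset.sum_add_distrib, Finset.sum_add_distrib,
    count_empty_inter (F₁.image ⇑f₁) k, hcomplC,
    sum_over_subsets f₁ k
      (fun S => ((Nat.card (G₁.induce ((S : Finset V₁) : Set V₁)).ConnectedComponent : ℤ) - 1)),
    sum_over_subsets f₂ k
      (fun S => ((Nat.card (G₂.induce ((S : Finset V₂) : Set V₂)).ConnectedComponent : ℤ) - 1)),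
    hcompl1, hcompl2]
  have hb1 : ∀ i : ℕ,
      (∑ S ∈ Finset.powersetCard i (Finset.univ : Finset V₁),
        ((Nat.card (G₁.induce ((S : Finset V₁) : Set V₁)).ConnectedComponent : ℤ) - 1))
      = complexB i Δ₁ := fun i => (complexB_eq_skel i Δ₁).symm
  have hb2 : ∀ i : ℕ,
      (∑ S ∈ Finset.powersetCard i (Finset.univ : Finset V₂),
        ((Nat.card (G₂.induce ((S : Finset V₂) : Set V₂)).ConnectedComponent : ℤ) - 1))
      = complexB i Δ₂ := fun i => (complexB_eq_skel i Δ₂).symm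
  simp_rw [hb1, hb2]
  rw [Finset.sum_add_distrib]
end

section
/- Let G be a graph on n vertices obtained from the complete graph K_t on vertices {v₁,…,v_t} by adding n−t new vertices v_{t+1},…,v_n, each adjacent exactly to all of v₁,…,v_t. Then for 1 ≤ k ≤ n, a k-subset W of the vertices induces a disconnected subgraph if and only if W ⊆ {v_{t+1},…,v_n} and |W| ≥ 2, in which case G|_W has exactly k components; hence c_k(G) = C(n,k) + (k−1)·C(n−t,k). -/
open Finset

lemma card_cc_bot (α : Type) : Nat.card (⊥ : SimpleGraph α).ConnectedComponent = Nat.card α := by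
  refine (Nat.card_congr (Equiv.ofBijective (⊥ : SimpleGraph α).connectedComponentMk ⟨?_, ?_⟩)).symm
  · intro a b hab
    exact SimpleGraph.reachable_bot.mp (SimpleGraph.ConnectedComponent.exact hab)
  · exact Quot.mk_surjective

lemma card_cc_conn {α : Type} {G : SimpleGraph α} (h : G.Connected) :
    Nat.card G.ConnectedComponent = 1 := by
  rw [Nat.card_eq_one_iff_unique]
  obtain ⟨v⟩ := h.nonempty
  exact ⟨h.preconnected.subsingleton_connectedComponent, ⟨G.connectedComponentMk v⟩⟩


/-- for the graph obtained from `K_t` by adding `n - t` vertices each joined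
exactly to the `t` clique vertices: a `k`-subset (`1 ≤ k ≤ n`) induces a disconnected graph
iff it consists of new vertices and has at least two elements, in which case it has `k`
components; hence `c_k(G) = C(n,k) + (k-1)·C(n-t,k)`. -/
theorem ck_clique_with_pendants (n t k : ℕ) (ht : t ≤ n) (G : SimpleGraph (Fin n))
    (hG : ∀ x y, G.Adj x y ↔ x ≠ y ∧ ((x : ℕ) < t ∨ (y : ℕ) < t))
    (hk1 : 1 ≤ k) (hkn : k ≤ n) :
    (∀ W ∈ Finset.powersetCard k (Finset.univ : Finset (Fin n)),
      (¬ (G.induce (W : Set (Fin n))).Connected ↔ ((∀ x ∈ W, t ≤ (x : ℕ)) ∧ 2 ≤ k)) ∧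
      ((∀ x ∈ W, t ≤ (x : ℕ)) → 2 ≤ k →
        Nat.card (G.induce (W : Set (Fin n))).ConnectedComponent = k)) ∧
    graphC k G = n.choose k + (k - 1) * ((n - t).choose k) := by
  -- if W contains a clique vertex, induced connected
  have hconn : ∀ W : Finset (Fin n), ∀ x ∈ W, (x : ℕ) < t →
      (G.induce (W : Set (Fin n))).Connected := by
    intro W x hx hxt
    have hxW : x ∈ (W : Set (Fin n)) := by simpa using hx
    have ra : ∀ a : (W : Set (Fin n)), (G.induce (W : Set (Fin n))).Reachable a ⟨x, hxW⟩ := by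
      intro a
      by_cases hax : a = ⟨x, hxW⟩
      · exact hax ▸ SimpleGraph.Reachable.refl a
      · refine SimpleGraph.Adj.reachable ?_
        show G.Adj (a : Fin n) x
        rw [hG]
        exact ⟨fun h => hax (Subtype.ext h), Or.inr hxt⟩
    rw [SimpleGraph.connected_iff]
    exact ⟨fun a b => (ra a).trans (ra b).symm, ⟨⟨x, hxW⟩⟩⟩
  -- if W all high, induced graph is bot
  have hbot : ∀ W : Finset (Fin n), (∀ x ∈ W, t ≤ (x : ℕ)) →
      G.induce (W : Set (Fin n)) = ⊥ := by
    intro W hW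
    ext a b
    simp only [SimpleGraph.comap_adj, SimpleGraph.bot_adj, iff_false, hG]
    rintro ⟨-, h | h⟩
    · exact absurd h (not_lt.mpr (hW _ (Finset.mem_coe.mp a.2)))
    · exact absurd h (not_lt.mpr (hW _ (Finset.mem_coe.mp b.2)))
  have hcard : ∀ W : Finset (Fin n), (∀ x ∈ W, t ≤ (x : ℕ)) →
      Nat.card (G.induce (W : Set (Fin n))).ConnectedComponent = W.card := by
    intro W hW
    rw [hbot W hW, card_cc_bot, Nat.card_coe_set_eq, Set.ncard_coe_finset]
  -- per-W statement
  have main : ∀ W ∈ Finset.powersetCard k (Finset.univ : Finset (Fin n)),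
      (¬ (G.induce (W : Set (Fin n))).Connected ↔ ((∀ x ∈ W, t ≤ (x : ℕ)) ∧ 2 ≤ k)) ∧
      ((∀ x ∈ W, t ≤ (x : ℕ)) → 2 ≤ k →
        Nat.card (G.induce (W : Set (Fin n))).ConnectedComponent = k) := by
    intro W hWmem
    have hWcard : W.card = k := (Finset.mem_powersetCard.mp hWmem).2
    have hWne : W.Nonempty := Finset.card_pos.mp (hWcard ▸ hk1)
    refine ⟨⟨?_, ?_⟩, fun h1 _ => (hcard W h1).trans hWcard⟩
    · intro hnc
      by_contra hcon
      rw [not_and_or, not_forall] at hcon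
      rcases hcon with h | h
      · obtain ⟨x, hx⟩ := h
        rw [not_forall] at hx
        obtain ⟨hxW, hxt⟩ := hx
        exact hnc (hconn W x hxW (not_le.mp hxt))
      · -- k = 1, W singleton, connected
        interval_cases k
        obtain ⟨a, ha⟩ := Finset.card_eq_one.mp hWcard
        apply hnc
        rw [SimpleGraph.connected_iff]
        refine ⟨fun u v => ?_, ?_⟩
        · have : u = v := by
            apply Subtype.ext
            have hu := u.2; have hv := v.2
            simp only [ha, Finset.coe_singleton, Set.mem_singleton_iff] at hu hv
            rw [hu, hv]
          exact this ▸ SimpleGraph.Reachable.refl u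
        · obtain ⟨y, hy⟩ := hWne
          exact ⟨⟨y, by simpa using hy⟩⟩
    · rintro ⟨h1, h2⟩ hc
      obtain ⟨a, ha, b, hb, hab⟩ := Finset.one_lt_card.mp (by omega : 1 < W.card)
      have := hc.preconnected ⟨a, by simpa using ha⟩ ⟨b, by simpa using hb⟩
      rw [hbot W h1, SimpleGraph.reachable_bot] at this
      exact hab (by simpa [Subtype.ext_iff] using this)
  refine ⟨main, ?_⟩
  -- the counting
  set high : Finset (Fin n) := univ.filter (fun x : Fin n => t ≤ (x : ℕ)) with hhigh
  have hhighcard : high.card = n - t := by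
    have h1 : (univ.filter (fun x : Fin n => ¬ t ≤ (x : ℕ))).card = t := by
      rw [show univ.filter (fun x : Fin n => ¬ t ≤ (x : ℕ))
          = (univ : Finset (Fin t)).map (Fin.castLEEmb ht) from ?_]
      · simp
      · ext a
        simp only [mem_filter, mem_univ, true_and, mem_map, Fin.castLEEmb,
          Function.Embedding.coeFn_mk, not_le]
        constructor
        · rintro h; exact ⟨⟨a, h⟩, rfl⟩
        · rintro ⟨b, rfl⟩; exact b.isLt
    have h2 := Finset.card_filter_add_card_filter_not
      (s := (univ : Finset (Fin n))) (p := fun x : Fin n => t ≤ (x : ℕ))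
    simp only [Finset.card_univ, Fintype.card_fin] at h2
    rw [hhigh]
    omega
  have hval : ∀ W ∈ Finset.powersetCard k (Finset.univ : Finset (Fin n)),
      Nat.card (G.induce (W : Set (Fin n))).ConnectedComponent
        = (if W ⊆ high then k - 1 else 0) + 1 := by
    intro W hWmem
    have hWcard : W.card = k := (Finset.mem_powersetCard.mp hWmem).2
    have hWne : W.Nonempty := Finset.card_pos.mp (hWcard ▸ hk1)
    by_cases hsub : W ⊆ high
    · rw [if_pos hsub, hcard W (fun x hx => by simpa [hhigh] using hsub hx), hWcard]
      omega
    · rw [if_neg hsub]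
      obtain ⟨x, hxW, hxh⟩ := Finset.not_subset.mp hsub
      have hxt : (x : ℕ) < t := by simpa [hhigh] using hxh
      rw [card_cc_conn (hconn W x hxW hxt)]
  rw [graphC, Finset.sum_congr rfl hval, Finset.sum_add_distrib, ← Finset.sum_filter]
  have hfil : (Finset.powersetCard k (Finset.univ : Finset (Fin n))).filter (· ⊆ high)
      = Finset.powersetCard k high := by
    ext W
    simp only [mem_filter, Finset.mem_powersetCard, Finset.subset_univ, true_and]
    tauto
  rw [hfil]
  simp [Finset.card_powersetCard, hhighcard, Fintype.card_fin, mul_comm]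
  exact Nat.add_comm _ _
end
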